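/- arXiv:1704.05491 — 3 statements merged into one kernel-verified Lean document; each statement's English description precedes it below -/
import Mathlib

section
/- Let P_1, …, P_N be discrete probability measures on ℝ^d, let λ_1, …, λ_N > 0 with ∑_{i=1}^N λ_i = 1, and let P̄ be a barycenter of P_1, …, P_N. Then there exists a non-mass splitting optimal transport from P̄ to P_1, …, P_N: there are maps T_1, …, T_N : ℝ^d → ℝ^d such that the pushforward of P̄ under T_i equals P_i for each i, and ∑_{i=1}^N λ_i ∫ ‖x − T_i(x)‖² dP̄(x) = φ(P̄). -/
open MeasureTheory ENNReal

/-- Points of `ℝ^d`. -/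
abbrev Pt (d : ℕ) := EuclideanSpace ℝ (Fin d)

/-- The set of atoms (support points) of a measure. -/
def msupp {α : Type*} [MeasurableSpace α] (P : Measure α) : Set α := {x | P {x} ≠ 0}

/-- A measure is finitely supported (discrete) if its set of atoms is finite and
carries all the mass. -/
def FinitelySupported {α : Type*} [MeasurableSpace α] (P : Measure α) : Prop :=
  (msupp P).Finite ∧ P (msupp P)ᶜ = 0

/-- Finite second moment. -/
def FiniteSecondMoment {d : ℕ} (P : Measure (Pt d)) : Prop :=
  ∫⁻ x, ENNReal.ofReal (‖x‖ ^ 2) ∂P < ⊤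

/-- The squared 2-Wasserstein distance: the infimum of `∫ ‖x - y‖² dπ` over all
couplings `π` of `P` and `Q`. -/
noncomputable def W2sq {d : ℕ} (P Q : Measure (Pt d)) : ℝ≥0∞ :=
  ⨅ π ∈ {π : Measure (Pt d × Pt d) | π.map Prod.fst = P ∧ π.map Prod.snd = Q},
    ∫⁻ p, ENNReal.ofReal (‖p.1 - p.2‖ ^ 2) ∂π

/-- The barycenter objective `φ(P) = ∑ i, λ i * W₂(P, P i)²`. -/
noncomputable def phi {d N : ℕ} (l : Fin N → ℝ) (Pm : Fin N → Measure (Pt d))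
    (P : Measure (Pt d)) : ℝ≥0∞ :=
  ∑ i, ENNReal.ofReal (l i) * W2sq P (Pm i)

/-- A (Wasserstein) barycenter: a probability measure with finite second moment
minimizing `φ` among all such measures. -/
def IsBarycenter {d N : ℕ} (l : Fin N → ℝ) (Pm : Fin N → Measure (Pt d))
    (P : Measure (Pt d)) : Prop :=
  IsProbabilityMeasure P ∧ FiniteSecondMoment P ∧
    ∀ Q : Measure (Pt d), IsProbabilityMeasure Q → FiniteSecondMoment Q →
      phi l Pm P ≤ phi l Pm Q

/-- The set `S` of weighted centroids of combinations of support points,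
one from each measure. -/
def centroidSet {d N : ℕ} (l : Fin N → ℝ) (Pm : Fin N → Measure (Pt d)) : Set (Pt d) :=
  {y | ∃ x : Fin N → Pt d, (∀ i, x i ∈ msupp (Pm i)) ∧ y = ∑ i, l i • x i}

/-- The union `S_org` of the supports of the measures. -/
def origSupport {d N : ℕ} (Pm : Fin N → Measure (Pt d)) : Set (Pt d) :=
  ⋃ i, msupp (Pm i)


open scoped Classical

lemma lintegral_of_finsupp {α : Type*} [MeasurableSpace α] [MeasurableSingletonClass α]
    (μ : Measure α) (F : Finset α) (hμ : μ (↑F)ᶜ = 0) (f : α → ℝ≥0∞) :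
    ∫⁻ x, f x ∂μ = ∑ x ∈ F, f x * μ {x} := by
  rw [← MeasureTheory.lintegral_finset F f (μ := μ)]
  rw [Measure.restrict_eq_self_of_ae_mem]
  rw [ae_iff]
  exact hμ

lemma measure_eq_sum_dirac {α : Type*} [MeasurableSpace α] [MeasurableSingletonClass α]
    (μ : Measure α) (F : Finset α) (hμ : μ (↑F)ᶜ = 0) :
    μ = ∑ x ∈ F, μ {x} • Measure.dirac x := by
  classical
  ext A hA
  rw [Measure.finset_sum_apply]
  have h1 : μ A = μ (A ∩ ↑F) := by
    apply le_antisymm _ (measure_mono Set.inter_subset_left)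
    calc μ A ≤ μ ((A ∩ ↑F) ∪ (↑F)ᶜ) := measure_mono (by intro x hx; by_cases h : x ∈ (F:Set α) <;> simp [h, hx])
    _ ≤ μ (A ∩ ↑F) + μ (↑F)ᶜ := measure_union_le _ _
    _ = μ (A ∩ ↑F) := by rw [hμ, add_zero]
  rw [h1]
  have h2 : A ∩ ↑F = ⋃ x ∈ F.filter (· ∈ A), ({x} : Set α) := by
    ext y
    simp only [Set.mem_inter_iff, Set.mem_iUnion, Finset.mem_filter, Set.mem_singleton_iff]
    constructor
    · rintro ⟨hyA, hyF⟩; exact ⟨y, ⟨hyF, hyA⟩, rfl⟩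
    · rintro ⟨x, ⟨hxF, hxA⟩, rfl⟩; exact ⟨hxA, hxF⟩
  rw [h2, measure_biUnion_finset]
  · rw [Finset.sum_filter]
    congr 1; ext x
    rw [Measure.smul_apply, Measure.dirac_apply' _ hA, smul_eq_mul]
    by_cases h : x ∈ A <;> simp [h, Set.indicator]
  · intro x hx y hy hxy
    exact Set.disjoint_singleton.2 hxy
  · intro x _; exact measurableSet_singleton x

section helpers
variable {α β : Type*} [MeasurableSpace α] [MeasurableSpace β]

lemma map_sum_smul_dirac {ι : Type*} (s : Finset ι) (c : ι → ℝ≥0∞) (p : ι → α)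
    {f : α → β} (hf : Measurable f) :
    (∑ t ∈ s, c t • Measure.dirac (p t)).map f = ∑ t ∈ s, c t • Measure.dirac (f (p t)) := by
  classical
  induction s using Finset.induction with
  | empty => simp [Measure.map_zero]
  | insert _ _ h ih =>
    rw [Finset.sum_insert h, Finset.sum_insert h, Measure.map_add _ _ hf,
      Measure.map_smul, Measure.map_dirac' hf, ih]

lemma sum_smul_dirac_apply {ι : Type*} (s : Finset ι) (c : ι → ℝ≥0∞) (p : ι → α)
    {A : Set α} (hA : MeasurableSet A) :
    (∑ t ∈ s, c t • Measure.dirac (p t)) A = ∑ t ∈ s, c t * (A.indicator 1 (p t)) := by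
  rw [Measure.finset_sum_apply]
  congr 1; ext t
  rw [Measure.smul_apply, Measure.dirac_apply' _ hA, smul_eq_mul]

lemma lintegral_sum_smul_dirac {ι : Type*} (s : Finset ι) (c : ι → ℝ≥0∞) (p : ι → α)
    {f : α → ℝ≥0∞} (hf : Measurable f) :
    ∫⁻ x, f x ∂(∑ t ∈ s, c t • Measure.dirac (p t)) = ∑ t ∈ s, c t * f (p t) := by
  rw [lintegral_finset_sum_measure]
  congr 1; ext t
  rw [lintegral_smul_measure, lintegral_dirac' _ hf, smul_eq_mul]

lemma measurable_of_finset_piecewise [MeasurableSingletonClass α] {γ : Type*} [MeasurableSpace γ]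
    (G : Finset α) (v : α → γ) (c : γ) :
    Measurable (fun x => if x ∈ G then v x else c) := by
  induction G using Finset.induction with
  | empty => simp only [Finset.notMem_empty, if_false]; exact measurable_const
  | @insert a G ha ih =>
    have heq : (fun x => if x ∈ insert a G then v x else c)
        = fun x => if x ∈ ({a} : Set α) then (fun _ => v a) x else (if x ∈ G then v x else c) := by
      funext x
      by_cases h1 : x = a <;> by_cases h2 : x ∈ G <;> simp [h1, h2]
    rw [heq]
    exact Measurable.ite (measurableSet_singleton a) measurable_const ih

end helpers

section W2
variable {d : ℕ}

lemma measurable_cost {d : ℕ} : Measurable (fun p : Pt d × Pt d => ENNReal.ofReal (‖p.1 - p.2‖ ^ 2)) := by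
  apply Measurable.ennreal_ofReal
  exact ((measurable_fst.sub measurable_snd).norm.pow measurable_const)

lemma measurable_costb {d : ℕ} (b : Pt d) : Measurable (fun x : Pt d => ENNReal.ofReal (‖x - b‖ ^ 2)) := by
  apply Measurable.ennreal_ofReal
  exact ((measurable_id.sub measurable_const).norm.pow measurable_const)

lemma W2sq_le_cost {P Q : Measure (Pt d)} {π : Measure (Pt d × Pt d)}
    (h1 : π.map Prod.fst = P) (h2 : π.map Prod.snd = Q) :
    W2sq P Q ≤ ∫⁻ p, ENNReal.ofReal (‖p.1 - p.2‖ ^ 2) ∂π := by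
  exact iInf₂_le π ⟨h1, h2⟩

lemma ofReal_sq_sub_le (x y : Pt d) : ENNReal.ofReal (‖x - y‖ ^ 2) ≤
    2 * ENNReal.ofReal (‖x‖ ^ 2) + 2 * ENNReal.ofReal (‖y‖ ^ 2) := by
  calc ENNReal.ofReal (‖x - y‖ ^ 2) ≤ ENNReal.ofReal (2 * ‖x‖ ^ 2 + 2 * ‖y‖ ^ 2) := by
        apply ENNReal.ofReal_le_ofReal
        have h := norm_sub_le x y
        have h2 : ‖x - y‖ ^ 2 ≤ (‖x‖ + ‖y‖) ^ 2 := by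
          apply pow_le_pow_left₀ (norm_nonneg _) h
        nlinarith [sq_nonneg (‖x‖ - ‖y‖)]
    _ ≤ _ := by
        rw [ENNReal.ofReal_add (by positivity) (by positivity),
          ENNReal.ofReal_mul (by norm_num), ENNReal.ofReal_mul (by norm_num)]
        simp [ENNReal.ofReal_ofNat]

lemma W2sq_lt_top {P Q : Measure (Pt d)} [IsProbabilityMeasure P] [IsProbabilityMeasure Q]
    (hP : FiniteSecondMoment P) (hQ : FiniteSecondMoment Q) : W2sq P Q < ⊤ := by
  have hc : W2sq P Q ≤ ∫⁻ p, ENNReal.ofReal (‖p.1 - p.2‖ ^ 2) ∂(P.prod Q) :=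
    W2sq_le_cost (by simp) (by simp)
  apply lt_of_le_of_lt hc
  have hb : ∫⁻ p, ENNReal.ofReal (‖p.1 - p.2‖ ^ 2) ∂(P.prod Q)
      ≤ ∫⁻ p : Pt d × Pt d, (2 * ENNReal.ofReal (‖p.1‖ ^ 2) + 2 * ENNReal.ofReal (‖p.2‖ ^ 2)) ∂(P.prod Q) :=
    lintegral_mono (fun p => ofReal_sq_sub_le p.1 p.2)
  apply lt_of_le_of_lt hb
  rw [lintegral_add_left (by fun_prop)]
  rw [lintegral_const_mul' 2 _ (by norm_num), lintegral_const_mul' 2 _ (by norm_num)]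
  have e1 : ∫⁻ p : Pt d × Pt d, ENNReal.ofReal (‖p.1‖ ^ 2) ∂(P.prod Q)
      = ∫⁻ x, ENNReal.ofReal (‖x‖ ^ 2) ∂P := by
    rw [← lintegral_map (f := fun x : Pt d => ENNReal.ofReal (‖x‖ ^ 2))
      (Measurable.ennreal_ofReal (measurable_norm.pow measurable_const)) measurable_fst]
    simp
  have e2 : ∫⁻ p : Pt d × Pt d, ENNReal.ofReal (‖p.2‖ ^ 2) ∂(P.prod Q)
      = ∫⁻ x, ENNReal.ofReal (‖x‖ ^ 2) ∂Q := by
    rw [← lintegral_map (f := fun x : Pt d => ENNReal.ofReal (‖x‖ ^ 2))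
      (Measurable.ennreal_ofReal (measurable_norm.pow measurable_const)) measurable_snd]
    simp
  rw [e1, e2]
  exact ENNReal.add_lt_top.2 ⟨ENNReal.mul_lt_top (by norm_num) hP,
    ENNReal.mul_lt_top (by norm_num) hQ⟩

lemma exists_coupling_cost_le {P Q : Measure (Pt d)} (h : W2sq P Q < ⊤) {ε : ℝ≥0∞} (hε : ε ≠ 0) :
    ∃ π : Measure (Pt d × Pt d), π.map Prod.fst = P ∧ π.map Prod.snd = Q ∧
      ∫⁻ p, ENNReal.ofReal (‖p.1 - p.2‖ ^ 2) ∂π ≤ W2sq P Q + ε := by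
  have hlt : W2sq P Q < W2sq P Q + ε := ENNReal.lt_add_right h.ne hε
  conv_lhs at hlt => rw [W2sq]
  rw [iInf_lt_iff] at hlt
  obtain ⟨π, hπ⟩ := hlt
  rw [iInf_lt_iff] at hπ
  obtain ⟨hmem, hcost⟩ := hπ
  exact ⟨π, hmem.1, hmem.2, hcost.le⟩

end W2

lemma sum_weighted_normsq {d N : ℕ} (l : Fin N → ℝ) (hsum : ∑ i, l i = 1)
    (t : Fin N → Pt d) (y : Pt d) :
    ∑ i, l i * ‖y - t i‖ ^ 2
      = ‖y‖ ^ 2 - 2 * (inner ℝ y (∑ i, l i • t i) : ℝ) + ∑ i, l i * ‖t i‖ ^ 2 := by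
  have hinner : (inner ℝ y (∑ i, l i • t i) : ℝ) = ∑ i, l i * (inner ℝ y (t i) : ℝ) := by
    rw [inner_sum]
    congr 1; ext i
    rw [real_inner_smul_right]
  rw [hinner]
  have : ∀ i : Fin N, l i * ‖y - t i‖ ^ 2
      = l i * ‖y‖ ^ 2 - 2 * (l i * (inner ℝ y (t i) : ℝ)) + l i * ‖t i‖ ^ 2 := by
    intro i
    rw [@norm_sub_sq_real]
    ring
  rw [Finset.sum_congr rfl (fun i _ => this i)]
  rw [Finset.sum_add_distrib, Finset.sum_sub_distrib, ← Finset.sum_mul, hsum,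
    ← Finset.mul_sum]
  ring

lemma variance_identity {d N : ℕ} (l : Fin N → ℝ) (hsum : ∑ i, l i = 1)
    (t : Fin N → Pt d) (x : Pt d) :
    ∑ i, l i * ‖x - t i‖ ^ 2
      = (∑ i, l i * ‖(∑ j, l j • t j) - t i‖ ^ 2) + ‖x - (∑ j, l j • t j)‖ ^ 2 := by
  set g := ∑ j, l j • t j with hg
  rw [sum_weighted_normsq l hsum t x, sum_weighted_normsq l hsum t g]
  have h1 : (inner ℝ g g : ℝ) = ‖g‖ ^ 2 := real_inner_self_eq_norm_sq g
  have h2 : ‖x - g‖ ^ 2 = ‖x‖ ^ 2 - 2 * (inner ℝ x g : ℝ) + ‖g‖ ^ 2 := norm_sub_sq_real x g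
  rw [h1, h2]
  ring

lemma fiber_sum_eq {d N : ℕ} (B : Fin N → Finset (Pt d))
    (f : Fin N → Pt d → Pt d → ℝ≥0∞) (i : Fin N) (b : Pt d) (hb : b ∈ B i) (x : Pt d)
    (h1 : ∀ j, ∑ b' ∈ B j, f j b' x = 1) :
    ∑ t ∈ (Fintype.piFinset B).filter (fun t => t i = b), ∏ j, f j (t j) x = f i b x := by
  classical
  have hset : (Fintype.piFinset B).filter (fun t => t i = b)
      = Fintype.piFinset (Function.update B i {b}) := by
    ext t
    simp only [Finset.mem_filter, Fintype.mem_piFinset]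
    constructor
    · rintro ⟨ht, hti⟩ j
      by_cases hj : j = i
      · subst hj; simp [Function.update_self, hti]
      · simp [Function.update_of_ne hj, ht j]
    · intro ht
      constructor
      · intro j
        by_cases hj : j = i
        · subst hj
          have := ht j; simp [Function.update_self] at this; simp [this, hb]
        · have := ht j; simpa [Function.update_of_ne hj] using this
      · have := ht i; simpa [Function.update_self] using this
  rw [hset, ← Finset.prod_univ_sum (Function.update B i {b}) (fun j b' => f j b' x)]
  rw [← Finset.mul_prod_erase Finset.univ _ (Finset.mem_univ i)]
  rw [Function.update_self, Finset.sum_singleton]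
  have : ∀ j ∈ Finset.univ.erase i, ∑ b' ∈ Function.update B i {b} j, f j b' x = 1 := by
    intro j hj
    rw [Function.update_of_ne (Finset.ne_of_mem_erase hj)]
    exact h1 j
  rw [Finset.prod_congr rfl this, Finset.prod_const_one, mul_one]

lemma total_sum_eq {d N : ℕ} (B : Fin N → Finset (Pt d))
    (f : Fin N → Pt d → Pt d → ℝ≥0∞) (x : Pt d)
    (h1 : ∀ j, ∑ b' ∈ B j, f j b' x = 1) :
    ∑ t ∈ Fintype.piFinset B, ∏ j, f j (t j) x = 1 := by
  rw [← Finset.prod_univ_sum B (fun j b' => f j b' x)]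
  simp [h1]

lemma core_ineq {d N : ℕ} (l : Fin N → ℝ) (Pm : Fin N → Measure (Pt d))
    (hl : ∀ i, 0 < l i) (hsum : ∑ i, l i = 1)
    (Pbar : Measure (Pt d)) (hbar : IsBarycenter l Pm Pbar)
    (B : Fin N → Finset (Pt d)) (hB : ∀ i, Pm i (↑(B i))ᶜ = 0)
    (f : Fin N → Pt d → Pt d → ℝ≥0∞)
    (hfm : ∀ i b, Measurable (f i b))
    (hf1 : ∀ᵐ x ∂Pbar, ∀ j, ∑ b ∈ B j, f j b x = 1)
    (hfmass : ∀ i, ∀ b ∈ B i, ∫⁻ x, f i b x ∂Pbar = Pm i {b}) :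
    phi l Pm Pbar + ∑ t ∈ Fintype.piFinset B,
        ∫⁻ x, (∏ j, f j (t j) x) * ENNReal.ofReal (‖x - ∑ j, l j • t j‖ ^ 2) ∂Pbar
      ≤ ∑ i, ENNReal.ofReal (l i) *
          (∑ b ∈ B i, ∫⁻ x, f i b x * ENNReal.ofReal (‖x - b‖ ^ 2) ∂Pbar) := by
  classical
  haveI : IsProbabilityMeasure Pbar := hbar.1
  set F := Fintype.piFinset B with hF
  set h : (Fin N → Pt d) → Pt d → ℝ≥0∞ := fun t x => ∏ j, f j (t j) x with hh
  set g : (Fin N → Pt d) → Pt d := fun t => ∑ j, l j • t j with hgdef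
  set c : (Fin N → Pt d) → ℝ≥0∞ := fun t => ∫⁻ x, h t x ∂Pbar with hc
  set A : (Fin N → Pt d) → ℝ≥0∞ :=
    fun t => ∑ i, ENNReal.ofReal (l i) * ENNReal.ofReal (‖g t - t i‖ ^ 2) with hA
  have mh : ∀ t, Measurable (h t) := by
    intro t
    apply Finset.measurable_prod
    intro j _
    exact hfm j (t j)
  -- pointwise identity K3
  have K3 : ∀ t x, A t + ENNReal.ofReal (‖x - g t‖ ^ 2)
      = ∑ i, ENNReal.ofReal (l i) * ENNReal.ofReal (‖x - t i‖ ^ 2) := by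
    intro t x
    have e1 : ∀ y : Pt d, ∀ i : Fin N, ENNReal.ofReal (l i) * ENNReal.ofReal (‖y - t i‖ ^ 2)
        = ENNReal.ofReal (l i * ‖y - t i‖ ^ 2) := by
      intro y i; rw [← ENNReal.ofReal_mul (hl i).le]
    have e2 : ∀ y : Pt d, ∑ i, ENNReal.ofReal (l i) * ENNReal.ofReal (‖y - t i‖ ^ 2)
        = ENNReal.ofReal (∑ i, l i * ‖y - t i‖ ^ 2) := by
      intro y
      rw [Finset.sum_congr rfl (fun i _ => e1 y i)]
      rw [← ENNReal.ofReal_sum_of_nonneg]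
      intro i _
      exact mul_nonneg (hl i).le (by positivity)
    simp only [hA]
    rw [e2 (g t), e2 x]
    rw [← ENNReal.ofReal_add (Finset.sum_nonneg fun i _ => mul_nonneg (hl i).le (by positivity)) (by positivity)]
    rw [← variance_identity l hsum t x]
  -- total mass one
  have hQ1 : ∀ᵐ x ∂Pbar, ∑ t ∈ F, h t x = 1 := by
    filter_upwards [hf1] with x hx
    exact total_sum_eq B f x hx
  have hcF : ∑ t ∈ F, c t = 1 := by
    simp only [hc]
    rw [← lintegral_finset_sum F (fun t _ => mh t)]
    rw [lintegral_congr_ae hQ1]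
    simp
  have hct : ∀ t ∈ F, c t ≤ 1 := by
    intro t ht
    rw [← hcF]
    exact Finset.single_le_sum (fun t _ => zero_le) ht
  -- the comparison measure Q
  set Q : Measure (Pt d) := ∑ t ∈ F, c t • Measure.dirac (g t) with hQ
  have hprobQ : IsProbabilityMeasure Q := by
    constructor
    rw [hQ, sum_smul_dirac_apply F c g MeasurableSet.univ]
    simpa using hcF
  have hmomQ : FiniteSecondMoment Q := by
    rw [FiniteSecondMoment, hQ, lintegral_sum_smul_dirac F c g
      (Measurable.ennreal_ofReal (measurable_norm.pow measurable_const))]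
    rw [ENNReal.sum_lt_top]
    intro t ht
    exact ENNReal.mul_lt_top ((hct t ht).trans_lt one_lt_top) ENNReal.ofReal_lt_top
  have hphile : phi l Pm Pbar ≤ phi l Pm Q := hbar.2.2 Q hprobQ hmomQ
  -- the couplings σ i between Q and Pm i
  have hmaps : ∀ i : Fin N, ∀ t ∈ F, t i ∈ B i := fun i t ht => (Fintype.mem_piFinset.1 ht) i
  have hσfst : ∀ i : Fin N,
      (∑ t ∈ F, c t • Measure.dirac ((g t, t i) : Pt d × Pt d)).map Prod.fst = Q := by
    intro i
    rw [map_sum_smul_dirac F c _ measurable_fst]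
  have hσsnd : ∀ i : Fin N,
      (∑ t ∈ F, c t • Measure.dirac ((g t, t i) : Pt d × Pt d)).map Prod.snd = Pm i := by
    intro i
    rw [map_sum_smul_dirac F c _ measurable_snd]
    rw [← Finset.sum_fiberwise_of_maps_to (hmaps i) (fun t => c t • Measure.dirac (t i))]
    have hfib : ∀ b ∈ B i, ∑ t ∈ F.filter (fun t => t i = b), c t • Measure.dirac (t i)
        = (Pm i {b}) • Measure.dirac b := by
      intro b hb
      have e : ∀ t ∈ F.filter (fun t => t i = b),
          c t • Measure.dirac (t i) = c t • Measure.dirac b := by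
        intro t ht
        rw [(Finset.mem_filter.1 ht).2]
      rw [Finset.sum_congr rfl e, ← Finset.sum_smul]
      congr 1
      simp only [hc]
      rw [← lintegral_finset_sum _ (fun t _ => mh t)]
      rw [← hfmass i b hb]
      apply lintegral_congr_ae
      filter_upwards [hf1] with x hx
      exact fiber_sum_eq B f i b hb x hx
    rw [Finset.sum_congr rfl hfib]
    exact (measure_eq_sum_dirac (Pm i) (B i) (hB i)).symm
  have hWQ : ∀ i : Fin N, W2sq Q (Pm i) ≤ ∑ t ∈ F, c t * ENNReal.ofReal (‖g t - t i‖ ^ 2) := by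
    intro i
    refine le_trans (W2sq_le_cost (hσfst i) (hσsnd i)) (le_of_eq ?_)
    rw [lintegral_sum_smul_dirac F c _ measurable_cost]
  have hphiQ : phi l Pm Q ≤ ∑ t ∈ F, c t * A t := by
    rw [phi]
    refine le_trans (Finset.sum_le_sum (fun i _ => mul_le_mul_right (hWQ i) _)) (le_of_eq ?_)
    simp only [hA, Finset.mul_sum]
    rw [Finset.sum_comm]
    refine Finset.sum_congr rfl (fun t _ => ?_)
    refine Finset.sum_congr rfl (fun i _ => ?_)
    ring
  -- key pointwise/integral identity per tuple t
  have key : ∀ t ∈ F, c t * A t + ∫⁻ x, h t x * ENNReal.ofReal (‖x - g t‖ ^ 2) ∂Pbar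
      = ∫⁻ x, h t x * (∑ i, ENNReal.ofReal (l i) * ENNReal.ofReal (‖x - t i‖ ^ 2)) ∂Pbar := by
    intro t _
    simp only [hc]
    rw [← lintegral_mul_const (A t) (mh t)]
    rw [← lintegral_add_left (f := fun x => h t x * A t) ((mh t).mul measurable_const)]
    apply lintegral_congr
    intro x
    rw [← mul_add, K3 t x]
  have E_i : ∀ i : Fin N, ∑ t ∈ F, ∫⁻ x, h t x * ENNReal.ofReal (‖x - t i‖ ^ 2) ∂Pbar
      = ∑ b ∈ B i, ∫⁻ x, f i b x * ENNReal.ofReal (‖x - b‖ ^ 2) ∂Pbar := by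
    intro i
    rw [← Finset.sum_fiberwise_of_maps_to (hmaps i)
      (fun t => ∫⁻ x, h t x * ENNReal.ofReal (‖x - t i‖ ^ 2) ∂Pbar)]
    refine Finset.sum_congr rfl (fun b hb => ?_)
    have e : ∀ t ∈ F.filter (fun t => t i = b),
        (∫⁻ x, h t x * ENNReal.ofReal (‖x - t i‖ ^ 2) ∂Pbar)
          = ∫⁻ x, h t x * ENNReal.ofReal (‖x - b‖ ^ 2) ∂Pbar := by
      intro t ht
      rw [(Finset.mem_filter.1 ht).2]
    rw [Finset.sum_congr rfl e,
      ← lintegral_finset_sum _ (f := fun t x => h t x * ENNReal.ofReal (‖x - b‖ ^ 2)) (fun t _ => (mh t).mul (measurable_costb b))]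
    apply lintegral_congr_ae
    filter_upwards [hf1] with x hx
    rw [← Finset.sum_mul, fiber_sum_eq B f i b hb x hx]
  -- assemble
  have main : ∑ t ∈ F, c t * A t
      + ∑ t ∈ F, ∫⁻ x, h t x * ENNReal.ofReal (‖x - g t‖ ^ 2) ∂Pbar
      = ∑ i, ENNReal.ofReal (l i) *
          (∑ b ∈ B i, ∫⁻ x, f i b x * ENNReal.ofReal (‖x - b‖ ^ 2) ∂Pbar) := by
    rw [← Finset.sum_add_distrib, Finset.sum_congr rfl key]
    have e3 : ∀ t ∈ F, ∫⁻ x, h t x * (∑ i, ENNReal.ofReal (l i)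
        * ENNReal.ofReal (‖x - t i‖ ^ 2)) ∂Pbar
        = ∑ i, ENNReal.ofReal (l i) * ∫⁻ x, h t x * ENNReal.ofReal (‖x - t i‖ ^ 2) ∂Pbar := by
      intro t _
      have : ∀ x, h t x * (∑ i, ENNReal.ofReal (l i) * ENNReal.ofReal (‖x - t i‖ ^ 2))
          = ∑ i, ENNReal.ofReal (l i) * (h t x * ENNReal.ofReal (‖x - t i‖ ^ 2)) := by
        intro x
        rw [Finset.mul_sum]
        refine Finset.sum_congr rfl (fun i _ => ?_)
        ring
      rw [lintegral_congr this]
      rw [lintegral_finset_sum _ (f := fun i x => ENNReal.ofReal (l i) * (h t x * ENNReal.ofReal (‖x - t i‖ ^ 2))) (fun i _ =>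
        (measurable_const.mul ((mh t).mul (measurable_costb (t i)))))]
      refine Finset.sum_congr rfl (fun i _ => ?_)
      rw [lintegral_const_mul _ (f := fun x => h t x * ENNReal.ofReal (‖x - t i‖ ^ 2)) ((mh t).mul (measurable_costb (t i)))]
    rw [Finset.sum_congr rfl e3, Finset.sum_comm]
    refine Finset.sum_congr rfl (fun i _ => ?_)
    rw [← Finset.mul_sum, E_i i]
  calc phi l Pm Pbar + ∑ t ∈ F, ∫⁻ x, h t x * ENNReal.ofReal (‖x - g t‖ ^ 2) ∂Pbar
      ≤ (∑ t ∈ F, c t * A t)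
        + ∑ t ∈ F, ∫⁻ x, h t x * ENNReal.ofReal (‖x - g t‖ ^ 2) ∂Pbar :=
        add_le_add_left (hphile.trans hphiQ) _
    _ = _ := main
lemma withDensity_finsum {α : Type*} [MeasurableSpace α] (μ : Measure α) {ι : Type*}
    (s : Finset ι) (f : ι → α → ℝ≥0∞) (hf : ∀ i ∈ s, Measurable (f i)) :
    μ.withDensity (fun x => ∑ i ∈ s, f i x) = ∑ i ∈ s, μ.withDensity (f i) := by
  classical
  induction s using Finset.induction with
  | empty => simp
  | @insert a s ha ih =>
    rw [Finset.sum_insert ha]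
    have : (fun x => ∑ i ∈ insert a s, f i x) = f a + fun x => ∑ i ∈ s, f i x := by
      funext x
      simp [Finset.sum_insert ha]
    rw [this, withDensity_add_left (hf a (Finset.mem_insert_self a s)),
      ih (fun i hi => hf i (Finset.mem_insert_of_mem hi))]
lemma finiteSecondMoment_of_finsupp {d : ℕ} (P : Measure (Pt d)) [IsFiniteMeasure P]
    (B : Finset (Pt d)) (hB : P (↑B)ᶜ = 0) : FiniteSecondMoment P := by
  rw [FiniteSecondMoment, lintegral_of_finsupp P B hB]
  rw [ENNReal.sum_lt_top]
  intro b _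
  exact ENNReal.mul_lt_top ENNReal.ofReal_lt_top (measure_lt_top P _)

lemma phi_lt_top {d N : ℕ} (l : Fin N → ℝ) (Pm : Fin N → Measure (Pt d))
    (hprob : ∀ i, IsProbabilityMeasure (Pm i))
    (hmom : ∀ i, FiniteSecondMoment (Pm i))
    (P : Measure (Pt d)) [IsProbabilityMeasure P] (hP : FiniteSecondMoment P) :
    phi l Pm P < ⊤ := by
  rw [phi, ENNReal.sum_lt_top]
  intro i _
  haveI := hprob i
  exact ENNReal.mul_lt_top ENNReal.ofReal_lt_top (W2sq_lt_top hP (hmom i))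

lemma stepA {d N : ℕ} (l : Fin N → ℝ) (Pm : Fin N → Measure (Pt d))
    (hl : ∀ i, 0 < l i) (hsum : ∑ i, l i = 1)
    (hprob : ∀ i, IsProbabilityMeasure (Pm i))
    (Pbar : Measure (Pt d)) (hbar : IsBarycenter l Pm Pbar)
    (B : Fin N → Finset (Pt d)) (hB : ∀ i, Pm i (↑(B i))ᶜ = 0) :
    Pbar (↑((Fintype.piFinset B).image (fun t => ∑ j, l j • t j)))ᶜ = 0 := by
  classical
  haveI : IsProbabilityMeasure Pbar := hbar.1
  haveI : ∀ i, IsProbabilityMeasure (Pm i) := hprob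
  set F := Fintype.piFinset B with hF
  set g : (Fin N → Pt d) → Pt d := fun t => ∑ j, l j • t j with hgdef
  set G : Finset (Pt d) := F.image g with hG
  have hmomi : ∀ i, FiniteSecondMoment (Pm i) := fun i =>
    finiteSecondMoment_of_finsupp (Pm i) (B i) (hB i)
  have hphilt : phi l Pm Pbar < ⊤ := phi_lt_top l Pm hprob hmomi Pbar hbar.2.1
  -- measurability of A δ
  have hAmeas : ∀ δ : ℝ, MeasurableSet {x : Pt d | ∀ y ∈ G, δ ≤ ‖x - y‖} := by
    intro δ
    have : {x : Pt d | ∀ y ∈ G, δ ≤ ‖x - y‖} = ⋂ y ∈ G, {x : Pt d | δ ≤ ‖x - y‖} := by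
      ext x; simp
    rw [this]
    refine MeasurableSet.biInter (G : Set (Pt d)).to_countable (fun y _ => ?_)
    exact measurableSet_le measurable_const
      ((measurable_id.sub measurable_const).norm)
  -- main estimate for each positive real δ and ε
  have hkey : ∀ δ : ℝ, 0 < δ → ∀ ε : ℝ≥0∞, ε ≠ 0 →
      ENNReal.ofReal (δ ^ 2) * Pbar {x : Pt d | ∀ y ∈ G, δ ≤ ‖x - y‖} ≤ ε := by
    intro δ hδ ε hε
    -- choose near-optimal couplings
    have hex : ∀ i : Fin N, ∃ π : Measure (Pt d × Pt d),
        π.map Prod.fst = Pbar ∧ π.map Prod.snd = Pm i ∧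
        ∫⁻ p, ENNReal.ofReal (‖p.1 - p.2‖ ^ 2) ∂π ≤ W2sq Pbar (Pm i) + ε := by
      intro i
      exact exists_coupling_cost_le (W2sq_lt_top hbar.2.1 (hmomi i)) hε
    choose π hπ1 hπ2 hπ3 using hex
    -- the sliced measures and densities
    set μ : Fin N → Pt d → Measure (Pt d) :=
      fun i b => ((π i).restrict (Set.univ ×ˢ {b})).map Prod.fst with hμdef
    have hμapp : ∀ i b (A : Set (Pt d)), MeasurableSet A → μ i b A = π i (A ×ˢ {b}) := by
      intro i b A hA
      rw [hμdef]
      rw [Measure.map_apply measurable_fst hA, Measure.restrict_apply (measurable_fst hA)]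
      congr 1
      ext p
      simp only [Set.mem_inter_iff, Set.mem_preimage, Set.mem_prod, Set.mem_univ, true_and,
        Set.mem_singleton_iff]
    have hπt : ∀ i, π i (Set.univ ×ˢ (↑(B i) : Set (Pt d))ᶜ) = 0 := by
      intro i
      have : (Set.univ : Set (Pt d)) ×ˢ (↑(B i) : Set (Pt d))ᶜ = Prod.snd ⁻¹' (↑(B i) : Set (Pt d))ᶜ := by
        ext p
        simp only [Set.mem_prod, Set.mem_univ, true_and, Set.mem_preimage]
      rw [this, ← Measure.map_apply measurable_snd (B i).measurableSet.compl, hπ2 i]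
      exact hB i
    have hsumb : ∀ i, ∑ b ∈ B i, μ i b = Pbar := by
      intro i
      ext A hA
      rw [Measure.finset_sum_apply]
      have e1 : ∀ b ∈ B i, μ i b A = π i (A ×ˢ {b}) := fun b _ => hμapp i b A hA
      rw [Finset.sum_congr rfl e1]
      have e2 : A ×ˢ (↑(B i) : Set (Pt d)) = ⋃ b ∈ B i, A ×ˢ ({b} : Set (Pt d)) := by
        ext p
        simp only [Set.mem_prod, Set.mem_iUnion, Finset.mem_coe, Set.mem_singleton_iff]
        constructor
        · rintro ⟨hpA, hpB⟩; exact ⟨p.2, hpB, hpA, rfl⟩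
        · rintro ⟨b, hb, hpA, hpb⟩; exact ⟨hpA, hpb ▸ hb⟩
      have e3 : ∑ b ∈ B i, π i (A ×ˢ ({b} : Set (Pt d))) = π i (A ×ˢ (↑(B i) : Set (Pt d))) := by
        rw [e2, measure_biUnion_finset]
        · intro b hb b' hb' hbb'
          simp only [Function.onFun]
          apply Set.disjoint_left.2
          rintro p ⟨_, hp⟩ ⟨_, hp'⟩
          exact hbb' (by rw [← hp, ← hp'])
        · intro b _
          exact hA.prod (measurableSet_singleton b)
      rw [e3]
      have e4 : π i (A ×ˢ (Set.univ : Set (Pt d))) = Pbar A := by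
        have : A ×ˢ (Set.univ : Set (Pt d)) = Prod.fst ⁻¹' A := by ext p; simp
        rw [this, ← Measure.map_apply measurable_fst hA, hπ1 i]
      rw [← e4]
      apply le_antisymm (measure_mono (Set.prod_mono_right (Set.subset_univ _)))
      calc π i (A ×ˢ (Set.univ : Set (Pt d)))
          ≤ π i (A ×ˢ (↑(B i) : Set (Pt d))) + π i (Set.univ ×ˢ (↑(B i) : Set (Pt d))ᶜ) := by
            apply le_trans _ (measure_union_le _ _)
            apply measure_mono
            rintro p ⟨hpA, -⟩
            by_cases hp : p.2 ∈ (↑(B i) : Set (Pt d))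
            · exact Or.inl ⟨hpA, hp⟩
            · exact Or.inr ⟨trivial, hp⟩
        _ = π i (A ×ˢ (↑(B i) : Set (Pt d))) := by rw [hπt i, add_zero]
    have hle : ∀ i, ∀ b ∈ B i, μ i b ≤ Pbar := by
      intro i b hb
      rw [← hsumb i]
      refine Measure.le_iff'.2 (fun s => ?_)
      rw [Measure.finset_sum_apply]
      exact Finset.single_le_sum (f := fun b => μ i b s) (fun _ _ => zero_le) hb
    have hac : ∀ i, ∀ b ∈ B i, μ i b ≪ Pbar := fun i b hb => (hle i b hb).absolutelyContinuous
    set f : Fin N → Pt d → Pt d → ℝ≥0∞ := fun i b => (μ i b).rnDeriv Pbar with hfdef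
    have hfm : ∀ i b, Measurable (f i b) := fun i b => Measure.measurable_rnDeriv _ _
    haveI hfinπ : ∀ i, IsFiniteMeasure (π i) := by
      intro i
      constructor
      have h := congrArg (fun m : Measure (Pt d) => m Set.univ) (hπ1 i)
      simp only [Measure.map_apply measurable_fst MeasurableSet.univ, Set.preimage_univ] at h
      rw [h]
      exact measure_lt_top Pbar _
    haveI hfinμ : ∀ i b, IsFiniteMeasure (μ i b) := by
      intro i b
      constructor
      rw [hμapp i b Set.univ MeasurableSet.univ]
      exact measure_lt_top (π i) _
    have hwd : ∀ i, ∀ b ∈ B i, Pbar.withDensity (f i b) = μ i b := by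
      intro i b hb
      exact Measure.withDensity_rnDeriv_eq _ _ (hac i b hb)
    have hf1 : ∀ᵐ x ∂Pbar, ∀ j, ∑ b ∈ B j, f j b x = 1 := by
      rw [ae_all_iff]
      intro j
      have h1 : Pbar.withDensity (fun x => ∑ b ∈ B j, f j b x) = Pbar := by
        rw [withDensity_finsum Pbar (B j) (f j) (fun b _ => hfm j b)]
        rw [Finset.sum_congr rfl (hwd j), hsumb j]
      have h2 : Pbar.withDensity (fun x => ∑ b ∈ B j, f j b x)
          = Pbar.withDensity (fun _ => (1 : ℝ≥0∞)) := by
        rw [h1]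
        exact withDensity_one.symm
      have h3 := (withDensity_eq_iff_of_sigmaFinite (μ := Pbar)
        (Finset.measurable_sum (B j) (fun b _ => hfm j b)).aemeasurable
        aemeasurable_const).1 h2
      filter_upwards [h3] with x hx
      exact hx
    have hfmass : ∀ i, ∀ b ∈ B i, ∫⁻ x, f i b x ∂Pbar = Pm i {b} := by
      intro i b hb
      have h1 : ∫⁻ x, f i b x ∂Pbar = μ i b Set.univ := by
        rw [← hwd i b hb, withDensity_apply _ MeasurableSet.univ, Measure.restrict_univ]
      rw [h1, hμapp i b Set.univ MeasurableSet.univ]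
      have : (Set.univ : Set (Pt d)) ×ˢ ({b} : Set (Pt d)) = Prod.snd ⁻¹' {b} := by
        ext p
        simp only [Set.mem_prod, Set.mem_univ, true_and, Set.mem_singleton_iff, Set.mem_preimage]
      rw [this, ← Measure.map_apply measurable_snd (measurableSet_singleton b), hπ2 i]
    -- cost identity
    have hcost : ∀ i, ∑ b ∈ B i, ∫⁻ x, f i b x * ENNReal.ofReal (‖x - b‖ ^ 2) ∂Pbar
        = ∫⁻ p, ENNReal.ofReal (‖p.1 - p.2‖ ^ 2) ∂(π i) := by
      intro i
      have e0 : ∫⁻ p, ENNReal.ofReal (‖p.1 - p.2‖ ^ 2) ∂(π i)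
          = ∫⁻ p in ⋃ b ∈ B i, (Set.univ ×ˢ ({b} : Set (Pt d))), ENNReal.ofReal (‖p.1 - p.2‖ ^ 2) ∂(π i) := by
        rw [Measure.restrict_eq_self_of_ae_mem]
        rw [ae_iff]
        have : {p : Pt d × Pt d | p ∉ ⋃ b ∈ B i, (Set.univ ×ˢ ({b} : Set (Pt d)))}
            = Set.univ ×ˢ (↑(B i) : Set (Pt d))ᶜ := by
          ext p
          simp only [Set.mem_setOf_eq, Set.mem_iUnion, Set.mem_prod, Set.mem_univ, true_and,
            Set.mem_singleton_iff, Set.mem_compl_iff, Finset.mem_coe, not_exists]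
          constructor
          · intro h hm
            exact h p.2 hm rfl
          · intro h b hb heq
            exact h (heq ▸ hb)
        rw [this]
        exact hπt i
      rw [e0, lintegral_biUnion_finset ?_ (fun b _ => MeasurableSet.univ.prod (measurableSet_singleton b))]
      · apply Finset.sum_congr rfl
        intro b hb
        have e1 : ∫⁻ p in Set.univ ×ˢ ({b} : Set (Pt d)), ENNReal.ofReal (‖p.1 - p.2‖ ^ 2) ∂(π i)
            = ∫⁻ p in Set.univ ×ˢ ({b} : Set (Pt d)), ENNReal.ofReal (‖p.1 - b‖ ^ 2) ∂(π i) := by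
          apply setLIntegral_congr_fun (MeasurableSet.univ.prod (measurableSet_singleton b))
          unfold Set.EqOn
          rintro p ⟨-, hp2⟩
          simp only [Set.mem_singleton_iff] at hp2
          simp only [hp2]
        rw [e1]
        have e2 : ∫⁻ p in Set.univ ×ˢ ({b} : Set (Pt d)), ENNReal.ofReal (‖p.1 - b‖ ^ 2) ∂(π i)
            = ∫⁻ x, ENNReal.ofReal (‖x - b‖ ^ 2) ∂(μ i b) := by
          rw [hμdef]
          rw [lintegral_map (measurable_costb b) measurable_fst]
        rw [e2, ← hwd i b hb, lintegral_withDensity_eq_lintegral_mul Pbar (hfm i b) (measurable_costb b)]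
        rfl
      · intro b hb b' hb' hbb'
        apply Set.disjoint_left.2
        rintro p ⟨-, hp⟩ ⟨-, hp'⟩
        simp only [Set.mem_singleton_iff] at hp hp'
        exact hbb' (by rw [← hp, ← hp'])
    -- apply the core inequality
    have hcore := core_ineq l Pm hl hsum Pbar hbar B hB f hfm hf1 hfmass
    have hub : ∑ i, ENNReal.ofReal (l i) *
        (∑ b ∈ B i, ∫⁻ x, f i b x * ENNReal.ofReal (‖x - b‖ ^ 2) ∂Pbar)
        ≤ phi l Pm Pbar + ε := by
      calc ∑ i, ENNReal.ofReal (l i) *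
          (∑ b ∈ B i, ∫⁻ x, f i b x * ENNReal.ofReal (‖x - b‖ ^ 2) ∂Pbar)
          ≤ ∑ i, ENNReal.ofReal (l i) * (W2sq Pbar (Pm i) + ε) := by
            apply Finset.sum_le_sum
            intro i _
            apply mul_le_mul_right
            rw [hcost i]
            exact hπ3 i
        _ = phi l Pm Pbar + (∑ i, ENNReal.ofReal (l i)) * ε := by
            rw [phi, Finset.sum_mul, ← Finset.sum_add_distrib]
            apply Finset.sum_congr rfl
            intro i _
            rw [mul_add]
        _ = phi l Pm Pbar + ε := by
            rw [← ENNReal.ofReal_sum_of_nonneg (fun i _ => (hl i).le), hsum]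
            simp
    have hD : ∑ t ∈ F, ∫⁻ x, (∏ j, f j (t j) x) * ENNReal.ofReal (‖x - g t‖ ^ 2) ∂Pbar ≤ ε := by
      have := le_trans hcore hub
      exact (ENNReal.add_le_add_iff_left hphilt.ne).1 this
    -- lower bound by concentration
    set Aδ := {x : Pt d | ∀ y ∈ G, δ ≤ ‖x - y‖} with hAδ
    have hlow : ENNReal.ofReal (δ ^ 2) * Pbar Aδ
        ≤ ∑ t ∈ F, ∫⁻ x, (∏ j, f j (t j) x) * ENNReal.ofReal (‖x - g t‖ ^ 2) ∂Pbar := by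
      rw [← lintegral_finset_sum F (f := fun t x => (∏ j, f j (t j) x) * ENNReal.ofReal (‖x - g t‖ ^ 2)) (fun t _ => ((by
          apply Finset.measurable_prod
          intro j _
          exact hfm j (t j) : Measurable fun x => ∏ j, f j (t j) x)).mul (measurable_costb (g t)))]
      calc ENNReal.ofReal (δ ^ 2) * Pbar Aδ
          = ∫⁻ x, Aδ.indicator (fun _ => ENNReal.ofReal (δ ^ 2)) x ∂Pbar := by
            rw [lintegral_indicator_const (hAmeas δ)]
        _ ≤ _ := by
            apply lintegral_mono_ae
            filter_upwards [hf1] with x hx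
            by_cases hxA : x ∈ Aδ
            · rw [Set.indicator_of_mem hxA]
              have h1 : ∀ t ∈ F, ENNReal.ofReal (δ ^ 2) * ((fun x => ∏ j, f j (t j) x) x)
                  ≤ (∏ j, f j (t j) x) * ENNReal.ofReal (‖x - g t‖ ^ 2) := by
                intro t ht
                rw [mul_comm]
                apply mul_le_mul_right
                apply ENNReal.ofReal_le_ofReal
                have hgt : g t ∈ G := Finset.mem_image_of_mem g ht
                have := hxA (g t) hgt
                nlinarith [norm_nonneg (x - g t)]
              calc ENNReal.ofReal (δ ^ 2)
                  = ENNReal.ofReal (δ ^ 2) * ∑ t ∈ F, ∏ j, f j (t j) x := by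
                    rw [total_sum_eq B f x hx, mul_one]
                _ = ∑ t ∈ F, ENNReal.ofReal (δ ^ 2) * ∏ j, f j (t j) x := Finset.mul_sum _ _ _
                _ ≤ _ := Finset.sum_le_sum h1
            · rw [Set.indicator_of_notMem hxA]
              exact zero_le
    exact le_trans hlow hD
  -- conclude : Pbar Aδ = 0 for each δ > 0
  have hA0 : ∀ δ : ℝ, 0 < δ → Pbar {x : Pt d | ∀ y ∈ G, δ ≤ ‖x - y‖} = 0 := by
    intro δ hδ
    have h1 : ENNReal.ofReal (δ ^ 2) * Pbar {x : Pt d | ∀ y ∈ G, δ ≤ ‖x - y‖} ≤ 0 := by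
      apply ENNReal.le_of_forall_pos_le_add
      intro ε hε _
      rw [zero_add]
      exact hkey δ hδ ε (by exact_mod_cast hε.ne')
    have h2 : ENNReal.ofReal (δ ^ 2) ≠ 0 := by
      simp only [ne_eq, ENNReal.ofReal_eq_zero, not_le]
      positivity
    rcases mul_eq_zero.1 (le_antisymm h1 (zero_le)) with h | h
    · exact absurd h h2
    · exact h
  -- cover the complement of G by the sets A (1/(n+1))
  have hcover : (↑G : Set (Pt d))ᶜ ⊆ ⋃ n : ℕ, {x : Pt d | ∀ y ∈ G, 1 / (n + 1 : ℝ) ≤ ‖x - y‖} := by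
    intro x hx
    simp only [Set.mem_compl_iff, Finset.mem_coe] at hx
    by_cases hGe : G.Nonempty
    · have hpos : ∀ y ∈ G, 0 < ‖x - y‖ := by
        intro y hy
        rw [norm_pos_iff, sub_ne_zero]
        rintro rfl
        exact hx hy
      obtain ⟨y0, hy0, hmin⟩ := G.exists_min_image (fun y => ‖x - y‖) hGe
      obtain ⟨n, hn⟩ := exists_nat_one_div_lt (hpos y0 hy0)
      refine Set.mem_iUnion.2 ⟨n, fun y hy => le_trans hn.le (hmin y hy)⟩
    · refine Set.mem_iUnion.2 ⟨0, fun y hy => absurd ⟨y, hy⟩ hGe⟩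
  apply measure_mono_null hcover
  apply measure_iUnion_null
  intro n
  apply hA0
  positivity
lemma sum_subtype_eq {α M : Type*} [AddCommMonoid M] (s : Finset α) (f : α → M) :
    ∑ x : {a // a ∈ s}, f ↑x = ∑ a ∈ s, f a := by
  rw [Finset.univ_eq_attach, Finset.sum_attach]

lemma mass_sum {α : Type*} [MeasurableSpace α] [MeasurableSingletonClass α]
    (μ : Measure α) (F : Finset α) (hμ : μ (↑F)ᶜ = 0) :
    ∑ x ∈ F, μ {x} = μ Set.univ := by
  have h := lintegral_of_finsupp μ F hμ (fun _ => 1)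
  simpa using h.symm

lemma prod_null_of_marginals {d : ℕ} (π : Measure (Pt d × Pt d)) (Pa Pb : Measure (Pt d))
    (h1 : π.map Prod.fst = Pa) (h2 : π.map Prod.snd = Pb)
    (S B : Finset (Pt d)) (hS : Pa (↑S)ᶜ = 0) (hB : Pb (↑B)ᶜ = 0) :
    π (↑(S ×ˢ B) : Set (Pt d × Pt d))ᶜ = 0 := by
  have hsub : (↑(S ×ˢ B) : Set (Pt d × Pt d))ᶜ
      ⊆ (Prod.fst ⁻¹' (↑S : Set (Pt d))ᶜ) ∪ (Prod.snd ⁻¹' (↑B : Set (Pt d))ᶜ) := by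
    intro p hp
    simp only [Set.mem_compl_iff, Finset.coe_product, Set.mem_prod, Finset.mem_coe, not_and_or]
      at hp
    rcases hp with h | h
    · exact Or.inl h
    · exact Or.inr h
  apply measure_mono_null hsub
  apply measure_union_null
  · rw [← Measure.map_apply measurable_fst S.measurableSet.compl, h1]
    exact hS
  · rw [← Measure.map_apply measurable_snd B.measurableSet.compl, h2]
    exact hB

lemma stepB {d : ℕ} (Pbar P : Measure (Pt d)) [IsProbabilityMeasure Pbar]
    [IsProbabilityMeasure P] (S B : Finset (Pt d)) (hS : Pbar (↑S)ᶜ = 0)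
    (hBc : P (↑B)ᶜ = 0) :
    ∃ q : Pt d → Pt d → ℝ≥0∞,
      (∀ s ∈ S, ∑ b ∈ B, q s b = Pbar {s}) ∧
      (∀ b ∈ B, ∑ s ∈ S, q s b = P {b}) ∧
      (∑ s ∈ S, ∑ b ∈ B, q s b * ENNReal.ofReal (‖s - b‖ ^ 2) = W2sq Pbar P) := by
  classical
  have hmassS : ∑ s ∈ S, Pbar {s} = 1 := by rw [mass_sum Pbar S hS, measure_univ]
  have hmassB : ∑ b ∈ B, P {b} = 1 := by rw [mass_sum P B hBc, measure_univ]
  -- the compact set of transport matrices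
  set X := ({x // x ∈ S} → {y // y ∈ B} → ℝ≥0∞) with hX
  set C : Set X := {m | (∀ s, ∑ b, m s b = Pbar {(s : Pt d)}) ∧
    (∀ b, ∑ s, m s b = P {(b : Pt d)})} with hC
  set J : X → ℝ≥0∞ := fun m => ∑ s, ∑ b, m s b * ENNReal.ofReal (‖(s : Pt d) - (b : Pt d)‖ ^ 2)
    with hJ
  have hJcont : Continuous J := by
    apply continuous_finset_sum
    intro s _
    apply continuous_finset_sum
    intro b _
    exact (ENNReal.continuous_mul_const ENNReal.ofReal_lt_top.ne).comp
      ((continuous_apply b).comp (continuous_apply s))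
  have hCclosed : IsClosed C := by
    have e : C = (⋂ s, {m : X | ∑ b, m s b = Pbar {(s : Pt d)}})
        ∩ ⋂ b, {m : X | ∑ s, m s b = P {(b : Pt d)}} := by
      ext m
      simp only [hC, Set.mem_setOf_eq, Set.mem_inter_iff, Set.mem_iInter]
    rw [e]
    apply IsClosed.inter
    · apply isClosed_iInter
      intro s
      exact isClosed_eq (continuous_finset_sum _ (fun b _ =>
        (continuous_apply b).comp (continuous_apply s))) continuous_const
    · apply isClosed_iInter
      intro b
      exact isClosed_eq (continuous_finset_sum _ (fun s _ =>
        (continuous_apply b).comp (continuous_apply s))) continuous_const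
  have hCne : C.Nonempty := by
    refine ⟨fun s b => Pbar {(s : Pt d)} * P {(b : Pt d)}, ?_, ?_⟩
    · intro s
      rw [← Finset.mul_sum]
      have : ∑ b : {y // y ∈ B}, P {(b : Pt d)} = 1 := by
        rw [Finset.sum_coe_sort B (fun b => P {b})]
        exact hmassB
      rw [this, mul_one]
    · intro b
      rw [← Finset.sum_mul]
      have : ∑ s : {x // x ∈ S}, Pbar {(s : Pt d)} = 1 := by
        rw [Finset.sum_coe_sort S (fun s => Pbar {s})]
        exact hmassS
      rw [this, one_mul]
  obtain ⟨m, hmem, hmin⟩ := (hCclosed.isCompact).exists_isMinOn hCne hJcont.continuousOn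
  -- the induced coupling
  set π : Measure (Pt d × Pt d) := ∑ p : {x // x ∈ S} × {y // y ∈ B},
    m p.1 p.2 • Measure.dirac (((p.1 : Pt d), (p.2 : Pt d)) : Pt d × Pt d) with hπ
  have hπfst : π.map Prod.fst = Pbar := by
    rw [hπ, map_sum_smul_dirac Finset.univ _ _ measurable_fst]
    calc ∑ p : {x // x ∈ S} × {y // y ∈ B},
        m p.1 p.2 • Measure.dirac ((((p.1 : Pt d)), ((p.2 : Pt d))) : Pt d × Pt d).1
        = ∑ s : {x // x ∈ S}, Pbar {(s : Pt d)} • Measure.dirac (s : Pt d) := by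
          rw [Fintype.sum_prod_type]
          refine Finset.sum_congr rfl (fun s _ => ?_)
          have e0 : ∀ y : {y // y ∈ B}, m (s, y).1 (s, y).2
              • Measure.dirac ((((s : Pt d)), ((y : Pt d))) : Pt d × Pt d).1
              = m s y • Measure.dirac (s : Pt d) := fun y => rfl
          rw [Finset.sum_congr rfl (fun y _ => e0 y), ← Finset.sum_smul, (hmem.1 s)]
      _ = ∑ s ∈ S, Pbar {s} • Measure.dirac s :=
          sum_subtype_eq S (fun s => Pbar {s} • Measure.dirac s)
      _ = Pbar := (measure_eq_sum_dirac Pbar S hS).symm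
  have hπsnd : π.map Prod.snd = P := by
    rw [hπ, map_sum_smul_dirac Finset.univ _ _ measurable_snd]
    calc ∑ p : {x // x ∈ S} × {y // y ∈ B},
        m p.1 p.2 • Measure.dirac ((((p.1 : Pt d)), ((p.2 : Pt d))) : Pt d × Pt d).2
        = ∑ b : {y // y ∈ B}, P {(b : Pt d)} • Measure.dirac (b : Pt d) := by
          rw [Fintype.sum_prod_type_right]
          refine Finset.sum_congr rfl (fun b _ => ?_)
          have e0 : ∀ s : {x // x ∈ S}, m (s, b).1 (s, b).2
              • Measure.dirac ((((s : Pt d)), ((b : Pt d))) : Pt d × Pt d).2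
              = m s b • Measure.dirac (b : Pt d) := fun s => rfl
          rw [Finset.sum_congr rfl (fun s _ => e0 s), ← Finset.sum_smul, (hmem.2 b)]
      _ = ∑ b ∈ B, P {b} • Measure.dirac b :=
          sum_subtype_eq B (fun b => P {b} • Measure.dirac b)
      _ = P := (measure_eq_sum_dirac P B hBc).symm
  have hπcost : ∫⁻ p, ENNReal.ofReal (‖p.1 - p.2‖ ^ 2) ∂π = J m := by
    rw [hπ, lintegral_sum_smul_dirac Finset.univ _ _ measurable_cost]
    rw [hJ, Fintype.sum_prod_type]
  -- W2sq ≤ J m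
  have hle : W2sq Pbar P ≤ J m := by
    rw [← hπcost]
    exact W2sq_le_cost hπfst hπsnd
  -- W2sq ≥ J m
  have hge : J m ≤ W2sq Pbar P := by
    apply le_iInf₂
    intro π' hπ'
    obtain ⟨h1, h2⟩ := hπ'
    haveI : IsProbabilityMeasure π' := by
      constructor
      have h := congrArg (fun m : Measure (Pt d) => m Set.univ) h1
      simp only [Measure.map_apply measurable_fst MeasurableSet.univ, Set.preimage_univ] at h
      rw [h, measure_univ]
    have hnull : π' (↑(S ×ˢ B) : Set (Pt d × Pt d))ᶜ = 0 :=
      prod_null_of_marginals π' Pbar P h1 h2 S B hS hBc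
    rw [lintegral_of_finsupp π' (S ×ˢ B) hnull _]
    rw [Finset.sum_product]
    -- define the matrix of π'
    set m' : X := fun s b => π' {((s : Pt d), (b : Pt d))} with hm'
    have hm'mem : m' ∈ C := by
      constructor
      · intro s
        have e2 : ∀ b : {y // y ∈ B}, m' s b = π' (({(s : Pt d)} : Set (Pt d)) ×ˢ {(b : Pt d)}) := by
          intro b
          rw [hm']
          congr 1
          rw [Set.singleton_prod_singleton]
        rw [Finset.sum_congr rfl (fun b _ => e2 b)]
        rw [Finset.sum_coe_sort B (fun b => π' (({(s : Pt d)} : Set (Pt d)) ×ˢ {b}))]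
        -- ∑ b ∈ B, π' ({s} ×ˢ {b}) = Pbar {s}
        have e3 : ∑ b ∈ B, π' (({(s : Pt d)} : Set (Pt d)) ×ˢ {b})
            = π' (({(s : Pt d)} : Set (Pt d)) ×ˢ (↑B : Set (Pt d))) := by
          rw [← measure_biUnion_finset]
          · congr 1
            ext p
            simp only [Set.mem_iUnion, Set.mem_prod, Set.mem_singleton_iff, Finset.mem_coe]
            constructor
            · rintro ⟨b, hb, h1', h2'⟩
              exact ⟨h1', h2' ▸ hb⟩
            · rintro ⟨h1', h2'⟩
              exact ⟨p.2, h2', h1', rfl⟩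
          · intro b hb b' hb' hbb'
            apply Set.disjoint_left.2
            rintro p ⟨-, hp⟩ ⟨-, hp'⟩
            simp only [Set.mem_singleton_iff] at hp hp'
            exact hbb' (hp ▸ hp')
          · intro b _
            exact (measurableSet_singleton _).prod (measurableSet_singleton b)
        rw [e3]
        have e4 : π' (({(s : Pt d)} : Set (Pt d)) ×ˢ (Set.univ : Set (Pt d))) = Pbar {(s : Pt d)} := by
          have : ({(s : Pt d)} : Set (Pt d)) ×ˢ (Set.univ : Set (Pt d))
              = Prod.fst ⁻¹' {(s : Pt d)} := by
            ext p
            simp only [Set.mem_prod, Set.mem_univ, and_true, Set.mem_singleton_iff,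
              Set.mem_preimage]
          rw [this, ← Measure.map_apply measurable_fst (measurableSet_singleton _), h1]
        rw [← e4]
        apply le_antisymm (measure_mono (Set.prod_mono_right (Set.subset_univ _)))
        calc π' (({(s : Pt d)} : Set (Pt d)) ×ˢ (Set.univ : Set (Pt d)))
            ≤ π' (({(s : Pt d)} : Set (Pt d)) ×ˢ (↑B : Set (Pt d)))
              + π' (Prod.snd ⁻¹' (↑B : Set (Pt d))ᶜ) := by
              apply le_trans _ (measure_union_le _ _)
              apply measure_mono
              rintro p ⟨hp1, -⟩
              by_cases hp : p.2 ∈ (↑B : Set (Pt d))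
              · exact Or.inl ⟨hp1, hp⟩
              · exact Or.inr hp
          _ = π' (({(s : Pt d)} : Set (Pt d)) ×ˢ (↑B : Set (Pt d))) := by
              rw [← Measure.map_apply measurable_snd B.measurableSet.compl, h2, hBc, add_zero]
      · intro b
        have e2 : ∀ s : {x // x ∈ S}, m' s b = π' (({(s : Pt d)} : Set (Pt d)) ×ˢ {(b : Pt d)}) := by
          intro s
          rw [hm']
          congr 1
          rw [Set.singleton_prod_singleton]
        rw [Finset.sum_congr rfl (fun s _ => e2 s)]
        rw [Finset.sum_coe_sort S (fun s => π' (({s} : Set (Pt d)) ×ˢ {(b : Pt d)}))]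
        have e3 : ∑ s ∈ S, π' (({s} : Set (Pt d)) ×ˢ ({(b : Pt d)} : Set (Pt d)))
            = π' ((↑S : Set (Pt d)) ×ˢ ({(b : Pt d)} : Set (Pt d))) := by
          rw [← measure_biUnion_finset]
          · congr 1
            ext p
            simp only [Set.mem_iUnion, Set.mem_prod, Set.mem_singleton_iff, Finset.mem_coe]
            constructor
            · rintro ⟨s, hs, h1', h2'⟩
              exact ⟨h1' ▸ hs, h2'⟩
            · rintro ⟨h1', h2'⟩
              exact ⟨p.1, h1', rfl, h2'⟩
          · intro s hs s' hs' hss'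
            apply Set.disjoint_left.2
            rintro p ⟨hp, -⟩ ⟨hp', -⟩
            simp only [Set.mem_singleton_iff] at hp hp'
            exact hss' (hp ▸ hp')
          · intro s _
            exact (measurableSet_singleton s).prod (measurableSet_singleton _)
        rw [e3]
        have e4 : π' ((Set.univ : Set (Pt d)) ×ˢ ({(b : Pt d)} : Set (Pt d))) = P {(b : Pt d)} := by
          have : (Set.univ : Set (Pt d)) ×ˢ ({(b : Pt d)} : Set (Pt d))
              = Prod.snd ⁻¹' {(b : Pt d)} := by
            ext p
            simp only [Set.mem_prod, Set.mem_univ, true_and, Set.mem_singleton_iff,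
              Set.mem_preimage]
          rw [this, ← Measure.map_apply measurable_snd (measurableSet_singleton _), h2]
        rw [← e4]
        apply le_antisymm (measure_mono (Set.prod_mono_left (Set.subset_univ _)))
        calc π' ((Set.univ : Set (Pt d)) ×ˢ ({(b : Pt d)} : Set (Pt d)))
            ≤ π' ((↑S : Set (Pt d)) ×ˢ ({(b : Pt d)} : Set (Pt d)))
              + π' (Prod.fst ⁻¹' (↑S : Set (Pt d))ᶜ) := by
              apply le_trans _ (measure_union_le _ _)
              apply measure_mono
              rintro p ⟨-, hp2⟩
              by_cases hp : p.1 ∈ (↑S : Set (Pt d))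
              · exact Or.inl ⟨hp, hp2⟩
              · exact Or.inr hp
          _ = π' ((↑S : Set (Pt d)) ×ˢ ({(b : Pt d)} : Set (Pt d))) := by
              rw [← Measure.map_apply measurable_fst S.measurableSet.compl, h1, hS, add_zero]
    have hmin' : J m ≤ J m' := hmin hm'mem
    apply le_trans hmin'
    apply le_of_eq
    calc J m' = ∑ s : {x // x ∈ S}, ∑ b ∈ B,
          ENNReal.ofReal (‖((s : Pt d), b).1 - ((s : Pt d), b).2‖ ^ 2)
            * π' {((s : Pt d), b)} := by
          refine Finset.sum_congr rfl (fun s _ => ?_)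
          refine Eq.trans ?_ (sum_subtype_eq B (fun b =>
            ENNReal.ofReal (‖((s : Pt d), b).1 - ((s : Pt d), b).2‖ ^ 2)
              * π' {((s : Pt d), b)}))
          refine Finset.sum_congr rfl (fun b _ => ?_)
          rw [hm', mul_comm]
      _ = ∑ s ∈ S, ∑ b ∈ B, ENNReal.ofReal (‖(s, b).1 - (s, b).2‖ ^ 2) * π' {(s, b)} :=
          sum_subtype_eq S (fun s => ∑ b ∈ B,
            ENNReal.ofReal (‖(s, b).1 - (s, b).2‖ ^ 2) * π' {(s, b)})
  -- conclude
  refine ⟨fun s b => if hs : s ∈ S then (if hb : b ∈ B then m ⟨s, hs⟩ ⟨b, hb⟩ else 0) else 0,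
    ?_, ?_, ?_⟩
  · intro s hs
    refine Eq.trans (Eq.trans (sum_subtype_eq B (fun b => if hs' : s ∈ S then
      (if hb : b ∈ B then m ⟨s, hs'⟩ ⟨b, hb⟩ else 0) else 0)).symm ?_) (hmem.1 ⟨s, hs⟩)
    refine Finset.sum_congr rfl (fun b _ => ?_)
    rw [dif_pos hs, dif_pos b.2]
  · intro b hb
    refine Eq.trans (Eq.trans (sum_subtype_eq S (fun s => if hs : s ∈ S then
      (if hb' : b ∈ B then m ⟨s, hs⟩ ⟨b, hb'⟩ else 0) else 0)).symm ?_) (hmem.2 ⟨b, hb⟩)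
    refine Finset.sum_congr rfl (fun s _ => ?_)
    rw [dif_pos s.2, dif_pos hb]
  · rw [le_antisymm hle hge]
    refine Eq.trans (sum_subtype_eq S (fun s => ∑ b ∈ B, (if hs : s ∈ S then
      (if hb : b ∈ B then m ⟨s, hs⟩ ⟨b, hb⟩ else 0) else 0)
        * ENNReal.ofReal (‖s - b‖ ^ 2))).symm ?_
    refine Finset.sum_congr rfl (fun s _ => ?_)
    refine Eq.trans (sum_subtype_eq B (fun b => (if hs : (s : Pt d) ∈ S then
      (if hb : b ∈ B then m ⟨(s : Pt d), hs⟩ ⟨b, hb⟩ else 0) else 0)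
        * ENNReal.ofReal (‖(s : Pt d) - b‖ ^ 2))).symm ?_
    refine Finset.sum_congr rfl (fun b _ => ?_)
    rw [dif_pos s.2, dif_pos b.2]
/-- existence of a non-mass splitting optimal transport from a
barycenter to the measures: transport maps Tᵢ pushing the barycenter forward to
each Pᵢ whose total cost equals φ(P̄). -/
theorem exists_nonmass_splitting_optimal_transport {d N : ℕ}
    (l : Fin N → ℝ) (Pm : Fin N → Measure (Pt d))
    (hl : ∀ i, 0 < l i) (hsum : ∑ i, l i = 1)
    (hprob : ∀ i, IsProbabilityMeasure (Pm i))
    (hfin : ∀ i, FinitelySupported (Pm i))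
    (Pbar : Measure (Pt d)) (hbar : IsBarycenter l Pm Pbar) :
    ∃ T : Fin N → Pt d → Pt d,
      (∀ i, Measurable (T i)) ∧
      (∀ i, Pbar.map (T i) = Pm i) ∧
      ∑ i, ENNReal.ofReal (l i) * ∫⁻ x, ENNReal.ofReal (‖x - T i x‖ ^ 2) ∂Pbar =
        phi l Pm Pbar := by
  classical
  haveI : IsProbabilityMeasure Pbar := hbar.1
  haveI : ∀ i, IsProbabilityMeasure (Pm i) := hprob
  set B : Fin N → Finset (Pt d) := fun i => (hfin i).1.toFinset with hBdef
  have hB : ∀ i, Pm i (↑(B i))ᶜ = 0 := by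
    intro i
    have : (↑(B i) : Set (Pt d)) = msupp (Pm i) := Set.Finite.coe_toFinset _
    rw [this]
    exact (hfin i).2
  set F := Fintype.piFinset B with hF
  set g : (Fin N → Pt d) → Pt d := fun t => ∑ j, l j • t j with hgdef
  set G : Finset (Pt d) := F.image g with hG
  have hG0 : Pbar (↑G)ᶜ = 0 := stepA l Pm hl hsum hprob Pbar hbar B hB
  choose q hrow hcol hcost using fun i => stepB Pbar (Pm i) G (B i) hG0 (hB i)
  have hBne : ∀ i, (B i).Nonempty := by
    intro i
    rw [← Finset.coe_nonempty]
    by_contra h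
    rw [Set.not_nonempty_iff_eq_empty] at h
    have h2 := hB i
    rw [h, Set.compl_empty] at h2
    have h3 : (Pm i) Set.univ = 1 := measure_univ
    rw [h2] at h3
    exact zero_ne_one h3
  set b0 : Fin N → Pt d := fun i => (hBne i).choose with hb0def
  have hb0mem : ∀ i, b0 i ∈ B i := fun i => (hBne i).choose_spec
  -- the transport maps
  set sel : Fin N → Pt d → Pt d := fun i x =>
    if h : ((B i).filter (fun b => q i x b ≠ 0)).Nonempty then h.choose else b0 i with hseldef
  set T : Fin N → Pt d → Pt d := fun i x => if x ∈ G then sel i x else b0 i with hTdef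
  have hTmeas : ∀ i, Measurable (T i) := fun i =>
    by convert measurable_of_finset_piecewise G (sel i) (b0 i)
  -- the conditional densities
  set f : Fin N → Pt d → Pt d → ℝ≥0∞ := fun i b x =>
    if x ∈ G then (if Pbar {x} ≠ 0 then q i x b / Pbar {x}
      else (if b = b0 i then 1 else 0)) else (if b = b0 i then 1 else 0) with hfdef
  have hfm : ∀ i b, Measurable (f i b) := fun i b => by
    convert measurable_of_finset_piecewise G _ _
  have hqzero : ∀ i, ∀ s ∈ G, Pbar {s} = 0 → ∀ b ∈ B i, q i s b = 0 := by
    intro i s hsG hs0 b hb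
    have h1 : ∑ b ∈ B i, q i s b = 0 := by rw [hrow i s hsG, hs0]
    exact (Finset.sum_eq_zero_iff.1 h1) b hb
  have hf1 : ∀ x : Pt d, ∀ j, ∑ b ∈ B j, f j b x = 1 := by
    intro x j
    have hind : ∑ b ∈ B j, (if b = b0 j then (1 : ℝ≥0∞) else 0) = 1 := by
      rw [Finset.sum_ite_eq' (B j) (b0 j) (fun _ => (1 : ℝ≥0∞))]
      rw [if_pos (hb0mem j)]
    by_cases hxG : x ∈ G
    · by_cases hx0 : Pbar {x} ≠ 0
      · have e : ∀ b ∈ B j, f j b x = q j x b / Pbar {x} := by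
          intro b _
          simp only [hfdef, if_pos hxG, if_pos hx0]
        rw [Finset.sum_congr rfl e]
        simp only [div_eq_mul_inv, ← Finset.sum_mul]
        rw [hrow j x hxG, ← div_eq_mul_inv, ENNReal.div_self hx0 (measure_ne_top _ _)]
      · have e : ∀ b ∈ B j, f j b x = (if b = b0 j then 1 else 0) := by
          intro b _
          simp only [hfdef, if_pos hxG, if_neg hx0]
        rw [Finset.sum_congr rfl e, hind]
    · have e : ∀ b ∈ B j, f j b x = (if b = b0 j then 1 else 0) := by
        intro b _
        simp only [hfdef, if_neg hxG]
      rw [Finset.sum_congr rfl e, hind]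
  have hfmass : ∀ i, ∀ b ∈ B i, ∫⁻ x, f i b x ∂Pbar = Pm i {b} := by
    intro i b hb
    rw [lintegral_of_finsupp Pbar G hG0]
    rw [← hcol i b hb]
    refine Finset.sum_congr rfl (fun s hsG => ?_)
    by_cases hs0 : Pbar {s} ≠ 0
    · simp only [hfdef, if_pos hsG, if_pos hs0]
      rw [ENNReal.div_mul_cancel hs0 (measure_ne_top _ _)]
    · push_neg at hs0
      rw [hs0, mul_zero, hqzero i s hsG hs0 b hb]
  -- total cost of the matrix couplings
  have hcosti : ∀ i, ∑ b ∈ B i, ∫⁻ x, f i b x * ENNReal.ofReal (‖x - b‖ ^ 2) ∂Pbar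
      = W2sq Pbar (Pm i) := by
    intro i
    rw [← hcost i, Finset.sum_comm]
    refine Finset.sum_congr rfl (fun b hb => ?_)
    rw [lintegral_of_finsupp Pbar G hG0]
    refine Finset.sum_congr rfl (fun s hsG => ?_)
    by_cases hs0 : Pbar {s} ≠ 0
    · simp only [hfdef, if_pos hsG, if_pos hs0]
      rw [mul_comm (q i s b / Pbar {s}) _, mul_assoc,
        ENNReal.div_mul_cancel hs0 (measure_ne_top _ _), mul_comm]
    · push_neg at hs0
      rw [hs0, mul_zero, hqzero i s hsG hs0 b hb, zero_mul]
  have hphilt : phi l Pm Pbar < ⊤ := by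
    refine phi_lt_top l Pm hprob (fun i => finiteSecondMoment_of_finsupp (Pm i) (B i) (hB i))
      Pbar hbar.2.1
  -- apply the core inequality : the defect D is zero
  have hcore := core_ineq l Pm hl hsum Pbar hbar B hB f hfm (ae_of_all _ hf1) hfmass
  have hrhs : ∑ i, ENNReal.ofReal (l i) *
      (∑ b ∈ B i, ∫⁻ x, f i b x * ENNReal.ofReal (‖x - b‖ ^ 2) ∂Pbar) = phi l Pm Pbar := by
    rw [phi]
    exact Finset.sum_congr rfl (fun i _ => by rw [hcosti i])
  rw [hrhs] at hcore
  have hD0 : ∑ t ∈ F, ∫⁻ x, (∏ j, f j (t j) x)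
      * ENNReal.ofReal (‖x - ∑ j, l j • t j‖ ^ 2) ∂Pbar = 0 := by
    have h1 : phi l Pm Pbar + ∑ t ∈ F, ∫⁻ x, (∏ j, f j (t j) x)
        * ENNReal.ofReal (‖x - ∑ j, l j • t j‖ ^ 2) ∂Pbar ≤ phi l Pm Pbar + 0 := by
      rw [add_zero]
      exact hcore
    exact le_antisymm ((ENNReal.add_le_add_iff_left hphilt.ne).1 h1) (zero_le)
  -- pointwise consequence : tuples of positive density must have centroid s
  have hpt : ∀ t ∈ F, ∀ s ∈ G, Pbar {s} ≠ 0 → (∏ j, f j (t j) s) ≠ 0 → s = g t := by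
    intro t ht s hsG hs0 hprod
    have h1 : ∫⁻ x, (∏ j, f j (t j) x) * ENNReal.ofReal (‖x - ∑ j, l j • t j‖ ^ 2) ∂Pbar = 0 :=
      (Finset.sum_eq_zero_iff.1 hD0) t ht
    rw [lintegral_of_finsupp Pbar G hG0] at h1
    have h2 := (Finset.sum_eq_zero_iff.1 h1) s hsG
    rcases mul_eq_zero.1 h2 with h3 | h3
    · rcases mul_eq_zero.1 h3 with h4 | h4
      · exact absurd h4 hprod
      · rw [ENNReal.ofReal_eq_zero] at h4
        have h5 : ‖s - ∑ j, l j • t j‖ = 0 := by nlinarith [norm_nonneg (s - ∑ j, l j • t j)]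
        rw [norm_eq_zero, sub_eq_zero] at h5
        exact h5
    · exact absurd h3 hs0
  -- structure of the optimal matrices at atoms
  have hTfacts : ∀ i, ∀ s ∈ G, Pbar {s} ≠ 0 →
      (T i s ∈ B i ∧ ∀ b ∈ B i, q i s b ≠ 0 → b = T i s) := by
    intro i s hsG hs0
    have hAne : ∀ j, ((B j).filter (fun b => q j s b ≠ 0)).Nonempty := by
      intro j
      have h1 : ∑ b ∈ B j, q j s b ≠ 0 := by rw [hrow j s hsG]; exact hs0
      obtain ⟨b, hb, hbne⟩ := Finset.exists_ne_zero_of_sum_ne_zero h1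
      exact ⟨b, Finset.mem_filter.2 ⟨hb, hbne⟩⟩
    have hTs : ∀ j, T j s = (hAne j).choose := by
      intro j
      simp only [hTdef, if_pos hsG, hseldef, dif_pos (hAne j)]
    have hchoose : ∀ j, T j s ∈ B j ∧ q j s (T j s) ≠ 0 := by
      intro j
      rw [hTs j]
      have := (hAne j).choose_spec
      exact Finset.mem_filter.1 this
    -- any selection from the positive entries has centroid s
    have hsg : ∀ t : Fin N → Pt d, (∀ j, t j ∈ B j ∧ q j s (t j) ≠ 0) → s = g t := by
      intro t htp
      have htF : t ∈ F := Fintype.mem_piFinset.2 (fun j => (htp j).1)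
      apply hpt t htF s hsG hs0
      rw [Finset.prod_ne_zero_iff]
      intro j _
      simp only [hfdef, if_pos hsG, if_pos hs0]
      rw [ne_eq, ENNReal.div_eq_zero_iff]
      push_neg
      exact ⟨(htp j).2, measure_ne_top _ _⟩
    refine ⟨(hchoose i).1, ?_⟩
    intro b hb hbne
    -- compare the two selections
    have h1 := hsg (fun j => T j s) hchoose
    have h2 := hsg (Function.update (fun j => T j s) i b) (by
      intro j
      by_cases hj : j = i
      · subst hj
        rw [Function.update_self]
        exact ⟨hb, hbne⟩
      · rw [Function.update_of_ne hj]
        exact hchoose j)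
    have h3 : g (fun j => T j s) = g (Function.update (fun j => T j s) i b) := by
      rw [← h1, ← h2]
    simp only [hgdef] at h3
    have h4 : ∀ j ∈ (Finset.univ : Finset (Fin N)) \ {i},
        l j • Function.update (fun j => T j s) i b j = l j • T j s := by
      intro j hj
      rw [Finset.mem_sdiff, Finset.mem_singleton] at hj
      rw [Function.update_of_ne hj.2]
    have h5 : ∑ j, l j • T j s
        = ∑ j ∈ Finset.univ \ {i}, l j • T j s + l i • T i s := by
      rw [Finset.sum_eq_sum_sdiff_singleton_add (Finset.mem_univ i)]
    have h6 : ∑ j, l j • Function.update (fun j => T j s) i b j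
        = ∑ j ∈ Finset.univ \ {i}, l j • T j s + l i • b := by
      rw [Finset.sum_eq_sum_sdiff_singleton_add (Finset.mem_univ i)]
      rw [Finset.sum_congr rfl h4, Function.update_self]
    rw [h5, h6] at h3
    have h7 : l i • T i s = l i • b := add_left_cancel h3
    have h8 := smul_right_injective (Pt d) (hl i).ne' h7
    exact h8.symm
  have hq_at : ∀ i, ∀ s ∈ G, Pbar {s} ≠ 0 → q i s (T i s) = Pbar {s} := by
    intro i s hsG hs0
    obtain ⟨hTB, huniq⟩ := hTfacts i s hsG hs0
    rw [← hrow i s hsG]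
    rw [Finset.sum_eq_single_of_mem (T i s) hTB]
    intro b hb hbne
    by_contra hq
    exact hbne (huniq b hb hq)
  have hq_off : ∀ i, ∀ s ∈ G, ∀ b ∈ B i, b ≠ T i s → q i s b = 0 := by
    intro i s hsG b hb hbne
    by_cases hs0 : Pbar {s} ≠ 0
    · by_contra hq
      exact hbne ((hTfacts i s hsG hs0).2 b hb hq)
    · push_neg at hs0
      exact hqzero i s hsG hs0 b hb
  have hTmem : ∀ i, ∀ s ∈ G, T i s ∈ B i := by
    intro i s hsG
    by_cases hs0 : Pbar {s} ≠ 0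
    · exact (hTfacts i s hsG hs0).1
    · simp only [hTdef, if_pos hsG, hseldef]
      by_cases hA : ((B i).filter (fun b => q i s b ≠ 0)).Nonempty
      · rw [dif_pos hA]
        exact (Finset.mem_filter.1 hA.choose_spec).1
      · rw [dif_neg hA]
        exact hb0mem i
  refine ⟨T, hTmeas, ?_, ?_⟩
  · -- the pushforward property
    intro i
    have h1 : Pbar = ∑ s ∈ G, Pbar {s} • Measure.dirac s := measure_eq_sum_dirac Pbar G hG0
    rw [h1]
    rw [map_sum_smul_dirac G _ _ (hTmeas i)]
    rw [← Finset.sum_fiberwise_of_maps_to (fun s hs => hTmem i s hs)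
      (fun s => Pbar {s} • Measure.dirac (T i s))]
    have hfib : ∀ b ∈ B i, ∑ s ∈ G.filter (fun s => T i s = b), Pbar {s} • Measure.dirac (T i s)
        = (Pm i {b}) • Measure.dirac b := by
      intro b hb
      have e : ∀ s ∈ G.filter (fun s => T i s = b),
          Pbar {s} • Measure.dirac (T i s) = Pbar {s} • Measure.dirac b := by
        intro s hs
        rw [(Finset.mem_filter.1 hs).2]
      rw [Finset.sum_congr rfl e, ← Finset.sum_smul]
      congr 1
      rw [← hcol i b hb]
      rw [← Finset.sum_filter_add_sum_filter_not G (fun s => T i s = b) (fun s => q i s b)]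
      have e2 : ∑ s ∈ G.filter (fun s => ¬ T i s = b), q i s b = 0 := by
        apply Finset.sum_eq_zero
        intro s hs
        obtain ⟨hsG, hsne⟩ := Finset.mem_filter.1 hs
        exact hq_off i s hsG b hb (fun h => hsne h.symm)
      rw [e2, add_zero]
      apply Finset.sum_congr rfl
      intro s hs
      obtain ⟨hsG, hsT⟩ := Finset.mem_filter.1 hs
      by_cases hs0 : Pbar {s} ≠ 0
      · rw [← hsT, hq_at i s hsG hs0]
      · push_neg at hs0
        rw [hs0, hqzero i s hsG hs0 b hb]
    rw [Finset.sum_congr rfl hfib]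
    exact (measure_eq_sum_dirac (Pm i) (B i) (hB i)).symm
  · -- the cost identity
    rw [phi]
    refine Finset.sum_congr rfl (fun i _ => ?_)
    congr 1
    rw [lintegral_of_finsupp Pbar G hG0, ← hcost i]
    refine Finset.sum_congr rfl (fun s hsG => ?_)
    by_cases hs0 : Pbar {s} ≠ 0
    · rw [Finset.sum_eq_single_of_mem (T i s) (hTmem i s hsG)]
      · rw [hq_at i s hsG hs0, mul_comm]
      · intro b hb hbne
        rw [hq_off i s hsG b hb hbne, zero_mul]
    · push_neg at hs0
      rw [hs0, mul_zero]
      symm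
      apply Finset.sum_eq_zero
      intro b hb
      rw [hqzero i s hsG hs0 b hb, zero_mul]
end

section
/- Let P_1, …, P_N be discrete probability measures on ℝ^d, let λ_1, …, λ_N > 0 with ∑_{i=1}^N λ_i = 1, and let P̄ be a barycenter of P_1, …, P_N. Then ANY optimal transport from P̄ to P_1, …, P_N is non-mass splitting: if π_1, …, π_N are couplings of (P̄, P_1), …, (P̄, P_N) with ∑_{i=1}^N λ_i ∫ ‖x − y‖² dπ_i(x,y) = φ(P̄), then for every support point x of P̄ and every i there is exactly one point y_i(x) ∈ supp(P_i) with π_i({(x, y_i(x))}) > 0, and moreover π_i({(x, y_i(x))}) equals the mass of P̄ at x and x = ∑_{i=1}^N λ_i y_i(x). -/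
open MeasureTheory ENNReal

/- ============ auxiliary lemmas ============ -/

lemma aux_meas_eq_sum_dirac {α : Type*} [MeasurableSpace α] [MeasurableSingletonClass α]
    (μ : Measure α) (F : Finset α) (h : μ (↑F)ᶜ = 0) :
    μ = ∑ y ∈ F, μ {y} • Measure.dirac y := by
  classical
  ext A hA
  have h1 : μ A = μ (A ∩ ↑F) := by
    have h2 : μ (A \ ↑F) = 0 := measure_mono_null (fun z hz => hz.2) h
    rw [← measure_inter_add_diff A F.measurableSet, h2, add_zero]
  have h3 : A ∩ ↑F = ⋃ y ∈ F, A ∩ {y} := by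
    ext z; simp [and_comm]
  have h4 : μ (A ∩ ↑F) = ∑ y ∈ F, μ (A ∩ {y}) := by
    rw [h3]
    refine measure_biUnion_finset ?_ (fun y _ => hA.inter (measurableSet_singleton y))
    intro a ha b hb hab
    simp only [Set.disjoint_left]
    rintro z ⟨_, rfl⟩ ⟨_, h⟩
    exact hab (h.symm ▸ rfl)
  rw [h1, h4]
  rw [Measure.coe_finset_sum, Finset.sum_apply]
  refine Finset.sum_congr rfl fun y _ => ?_
  rw [Measure.smul_apply, Measure.dirac_apply' _ hA, smul_eq_mul]
  by_cases hy : y ∈ A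
  · rw [Set.inter_eq_right.mpr (Set.singleton_subset_iff.mpr hy)]
    simp [Set.indicator_of_mem hy]
  · simp [Set.indicator_of_notMem hy, Set.inter_singleton_eq_empty.mpr hy, hy]

lemma aux_lintegral_conc {α : Type*} [MeasurableSpace α] [MeasurableSingletonClass α]
    (μ : Measure α) (F : Finset α) (h : μ (↑F)ᶜ = 0) (f : α → ℝ≥0∞) :
    ∫⁻ z, f z ∂μ = ∑ y ∈ F, μ {y} * f y := by
  conv_lhs => rw [aux_meas_eq_sum_dirac μ F h]
  rw [lintegral_finset_sum_measure]
  refine Finset.sum_congr rfl fun y _ => ?_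
  rw [lintegral_smul_measure, lintegral_dirac, smul_eq_mul]

lemma aux_pi_marginal {N : ℕ} {β : Type*} [DecidableEq β] (F : Fin N → Finset β)
    (p : Fin N → β → ℝ≥0∞) (hp : ∀ j, ∑ y ∈ F j, p j y = 1) (i : Fin N) (f : β → ℝ≥0∞) :
    ∑ g ∈ Fintype.piFinset F, (∏ j, p j (g j)) * f (g i) = ∑ y ∈ F i, p i y * f y := by
  classical
  set q := Function.update p i (fun y => p i y * f y) with hq
  have key : ∀ g : Fin N → β, (∏ j, p j (g j)) * f (g i) = ∏ j, q j (g j) := by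
    intro g
    rw [← Finset.mul_prod_erase _ (fun j => p j (g j)) (Finset.mem_univ i),
        ← Finset.mul_prod_erase _ (fun j => q j (g j)) (Finset.mem_univ i)]
    have h1 : ∏ j ∈ Finset.univ.erase i, q j (g j) = ∏ j ∈ Finset.univ.erase i, p j (g j) :=
      Finset.prod_congr rfl fun j hj => by
        rw [hq, Function.update_of_ne (Finset.ne_of_mem_erase hj)]
    rw [h1, hq, Function.update_self]
    ring
  simp_rw [key]
  rw [← Finset.prod_univ_sum]
  rw [← Finset.mul_prod_erase _ (fun j => ∑ y ∈ F j, q j y) (Finset.mem_univ i)]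
  have h2 : ∏ j ∈ Finset.univ.erase i, ∑ y ∈ F j, q j y = 1 := by
    refine Finset.prod_eq_one fun j hj => ?_
    have : ∀ y, q j y = p j y := fun y => by
      rw [hq, Function.update_of_ne (Finset.ne_of_mem_erase hj)]
    simp_rw [this]; exact hp j
  rw [h2, mul_one, hq, Function.update_self]

lemma aux_centroid {d N : ℕ} (l : Fin N → ℝ) (hsum : ∑ i, l i = 1)
    (g : Fin N → Pt d) (x : Pt d) :
    ∑ i, l i * ‖x - g i‖^2 =
      ‖x - ∑ i, l i • g i‖^2 + ∑ i, l i * ‖(∑ i, l i • g i) - g i‖^2 := by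
  set m := ∑ i, l i • g i with hm
  have expand : ∀ i, ‖x - g i‖^2
      = ‖x - m‖^2 + 2 * (inner ℝ (x - m) (m - g i) : ℝ) + ‖m - g i‖^2 := by
    intro i
    have h : x - g i = (x - m) + (m - g i) := by abel
    rw [h, norm_add_sq_real]
  simp_rw [expand, mul_add]
  rw [Finset.sum_add_distrib, Finset.sum_add_distrib]
  have h1 : ∑ i : Fin N, l i * ‖x - m‖^2 = ‖x - m‖^2 := by
    rw [← Finset.sum_mul, hsum, one_mul]
  have h2 : ∑ i : Fin N, l i * (2 * (inner ℝ (x - m) (m - g i) : ℝ)) = 0 := by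
    have e : ∀ i : Fin N, l i * (2 * (inner ℝ (x - m) (m - g i) : ℝ))
        = 2 * (inner ℝ (x - m) (l i • (m - g i)) : ℝ) := by
      intro i; rw [real_inner_smul_right]; ring
    simp_rw [e]
    rw [← Finset.mul_sum, ← inner_sum]
    have h0 : ∑ i, l i • (m - g i) = 0 := by
      simp_rw [smul_sub]
      rw [Finset.sum_sub_distrib, ← Finset.sum_smul, hsum, one_smul, hm, sub_self]
    rw [h0, inner_zero_right, mul_zero]
  rw [h1, h2, add_zero]

lemma aux_cost_bound {E : Type*} [SeminormedAddGroup E] (a b : E) :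
    ENNReal.ofReal (‖a - b‖^2) ≤ 2 * ENNReal.ofReal (‖a‖^2) + 2 * ENNReal.ofReal (‖b‖^2) := by
  have h1 : ‖a - b‖^2 ≤ 2*‖a‖^2 + 2*‖b‖^2 := by
    nlinarith [pow_le_pow_left₀ (norm_nonneg (a - b)) (norm_sub_le a b) 2, sq_nonneg (‖a‖ - ‖b‖)]
  calc ENNReal.ofReal (‖a - b‖^2) ≤ ENNReal.ofReal (2*‖a‖^2 + 2*‖b‖^2) :=
        ENNReal.ofReal_le_ofReal h1
    _ = 2 * ENNReal.ofReal (‖a‖^2) + 2 * ENNReal.ofReal (‖b‖^2) := by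
        rw [ENNReal.ofReal_add (by positivity) (by positivity),
          ENNReal.ofReal_mul (by norm_num), ENNReal.ofReal_mul (by norm_num),
          ENNReal.ofReal_ofNat]

lemma aux_swap {ι γ : Type*} (I : Finset ι) (K : Finset γ) (L : ι → ℝ≥0∞) (W : γ → ℝ≥0∞)
    (v : ι → γ → ℝ≥0∞) :
    ∑ i ∈ I, L i * ∑ g ∈ K, W g * v i g = ∑ g ∈ K, W g * ∑ i ∈ I, L i * v i g := by
  simp_rw [Finset.mul_sum]
  rw [Finset.sum_comm]
  exact Finset.sum_congr rfl fun g _ => Finset.sum_congr rfl fun i _ => mul_left_comm _ _ _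

/- ============ main theorem ============ -/
set_option maxHeartbeats 2000000

/-- any optimal transport (couplings πᵢ realizing φ(P̄)) from a
barycenter is non-mass splitting: each support point x of P̄ sends all of its
mass to exactly one support point yᵢ(x) of each Pᵢ, and x is the weighted
centroid of the yᵢ(x). -/
theorem optimal_transport_nonmass_splitting {d N : ℕ}
    (l : Fin N → ℝ) (Pm : Fin N → Measure (Pt d))
    (hl : ∀ i, 0 < l i) (hsum : ∑ i, l i = 1)
    (hprob : ∀ i, IsProbabilityMeasure (Pm i))
    (hfin : ∀ i, FinitelySupported (Pm i))
    (Pbar : Measure (Pt d)) (hbar : IsBarycenter l Pm Pbar)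
    (π : Fin N → Measure (Pt d × Pt d))
    (hcoupl : ∀ i, (π i).map Prod.fst = Pbar ∧ (π i).map Prod.snd = Pm i)
    (hopt : ∑ i, ENNReal.ofReal (l i) * ∫⁻ p, ENNReal.ofReal (‖p.1 - p.2‖ ^ 2) ∂(π i) =
      phi l Pm Pbar) :
    ∀ x ∈ msupp Pbar, ∃ y : Fin N → Pt d,
      (∀ i, y i ∈ msupp (Pm i) ∧
        π i {(x, y i)} = Pbar {x} ∧
        ∀ y' : Pt d, π i {(x, y')} ≠ 0 → y' = y i) ∧
      x = ∑ i, l i • y i := by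
  classical
  intro x hx
  obtain ⟨hPbarProb, hPbarFSM, hmin⟩ := hbar
  haveI := hPbarProb
  -- basic notation
  set α : ℝ≥0∞ := Pbar {x} with hαdef
  have hα0 : α ≠ 0 := hx
  have hαtop : α ≠ ⊤ := measure_ne_top _ _
  set F : Fin N → Finset (Pt d) := fun i => (hfin i).1.toFinset with hFdef
  have hFconc : ∀ i, Pm i (↑(F i))ᶜ = 0 := by
    intro i
    have : (↑(F i) : Set (Pt d)) = msupp (Pm i) := (hfin i).1.coe_toFinset
    rw [this]; exact (hfin i).2
  set c : Pt d → Pt d → ℝ≥0∞ := fun a b => ENNReal.ofReal (‖a - b‖^2) with hcdef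
  have hcm : Measurable (fun p : Pt d × Pt d => c p.1 p.2) := by
    apply Measurable.ennreal_ofReal
    exact ((measurable_fst.sub measurable_snd).norm.pow_const 2)
  set w : Fin N → Pt d → ℝ≥0∞ := fun i y => π i {(x, y)} with hwdef
  -- marginals
  have hπfst : ∀ i, ∀ A : Set (Pt d), MeasurableSet A → π i (A ×ˢ Set.univ) = Pbar A := by
    intro i A hA
    rw [← (hcoupl i).1, Measure.map_apply measurable_fst hA]
    congr 1; ext p; simp
  have hπsnd : ∀ i, ∀ B : Set (Pt d), MeasurableSet B → π i (Set.univ ×ˢ B) = Pm i B := by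
    intro i B hB
    rw [← (hcoupl i).2, Measure.map_apply measurable_snd hB]
    congr 1; ext p; simp
  have hπprob : ∀ i, IsProbabilityMeasure (π i) := by
    intro i
    constructor
    rw [← Set.univ_prod_univ, hπsnd i _ MeasurableSet.univ]
    haveI := hprob i
    exact measure_univ
  haveI : ∀ i, IsFiniteMeasure (π i) := fun i => by haveI := hπprob i; infer_instance
  have hwtop : ∀ i y, w i y ≠ ⊤ := fun i y => measure_ne_top _ _
  have hw0 : ∀ i y, y ∉ F i → w i y = 0 := by
    intro i y hy
    refine measure_mono_null ?_ (by rw [hπsnd i _ (F i).measurableSet.compl]; exact hFconc i)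
    intro p hp
    rw [Set.mem_singleton_iff] at hp
    subst hp
    exact ⟨Set.mem_univ _, hy⟩
  -- the restriction of π i to {x} × univ is a finite combination of diracs
  have hmsx : MeasurableSet ({x} ×ˢ (Set.univ : Set (Pt d))) :=
    (measurableSet_singleton x).prod MeasurableSet.univ
  have hσ : ∀ i, (π i).restrict ({x} ×ˢ Set.univ)
      = ∑ y ∈ F i, w i y • Measure.dirac (x, y) := by
    intro i
    have hconc : (π i).restrict ({x} ×ˢ Set.univ) (↑((F i).image (fun y => (x, y))))ᶜ = 0 := by
      rw [Measure.restrict_apply ((F i).image (fun y => (x, y))).measurableSet.compl]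
      refine measure_mono_null ?_
        (by rw [hπsnd i _ (F i).measurableSet.compl]; exact hFconc i)
      rintro ⟨a, b⟩ ⟨hab, ha, -⟩
      refine ⟨Set.mem_univ _, fun hb => ?_⟩
      rw [Set.mem_singleton_iff] at ha
      subst ha
      exact hab (by simpa using Finset.mem_image_of_mem (fun y => (a, y)) (by simpa using hb))
    rw [aux_meas_eq_sum_dirac _ _ hconc, Finset.sum_image
      (by intro y1 _ y2 _ h; exact (Prod.mk.injEq _ _ _ _).mp h |>.2)]
    refine Finset.sum_congr rfl fun y hy => ?_
    congr 1
    rw [Measure.restrict_apply (measurableSet_singleton _)]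
    congr 1
    rw [Set.inter_eq_left.mpr (by rintro p rfl; exact ⟨rfl, Set.mem_univ _⟩)]
  have hwsum : ∀ i, ∑ y ∈ F i, w i y = α := by
    intro i
    have h1 : (π i).restrict ({x} ×ˢ Set.univ) Set.univ = α := by
      rw [Measure.restrict_apply MeasurableSet.univ, Set.univ_inter,
        hπfst i {x} (measurableSet_singleton x)]
    rw [hσ i] at h1
    rw [Measure.finset_sum_apply] at h1
    simpa using h1
  -- cost decomposition of π i
  have hCsplit : ∀ i, ∫⁻ p, c p.1 p.2 ∂π i
      = (∫⁻ p in ({x} ×ˢ Set.univ)ᶜ, c p.1 p.2 ∂π i) + ∑ y ∈ F i, w i y * c x y := by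
    intro i
    rw [← lintegral_add_compl (fun p => c p.1 p.2) hmsx, add_comm]
    congr 1
    rw [hσ i, lintegral_finset_sum_measure]
    refine Finset.sum_congr rfl fun y _ => ?_
    rw [lintegral_smul_measure, lintegral_dirac, smul_eq_mul]
  -- normalized weights
  set p : Fin N → Pt d → ℝ≥0∞ := fun i y => w i y / α with hpdef
  have hwp : ∀ i y, α * p i y = w i y := fun i y => ENNReal.mul_div_cancel hα0 hαtop
  have hpsum : ∀ i, ∑ y ∈ F i, p i y = 1 := by
    intro i
    rw [hpdef]
    simp_rw [div_eq_mul_inv]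
    rw [← Finset.sum_mul, hwsum i, ENNReal.mul_inv_cancel hα0 hαtop]
  have hptop : ∀ i y, p i y ≠ ⊤ := fun i y => (ENNReal.div_lt_top (hwtop i y) hα0).ne
  -- the product construction
  set K : Finset (Fin N → Pt d) := Fintype.piFinset F with hKdef
  set W : (Fin N → Pt d) → ℝ≥0∞ := fun g => ∏ j, p j (g j) with hWdef
  set m : (Fin N → Pt d) → Pt d := fun g => ∑ j, l j • g j with hmdef
  set L : Fin N → ℝ≥0∞ := fun i => ENNReal.ofReal (l i) with hLdef
  have hWsum : ∑ g ∈ K, W g = 1 := by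
    rw [hKdef, hWdef, ← Finset.prod_univ_sum]
    simp [hpsum]
  have hWtop : ∀ g, W g ≠ ⊤ := by
    intro g
    rw [hWdef]
    exact (ENNReal.prod_lt_top (fun j _ => (hptop j (g j)).lt_top)).ne
  have hmarg : ∀ i (f : Pt d → ℝ≥0∞),
      ∑ g ∈ K, W g * f (g i) = ∑ y ∈ F i, p i y * f y := fun i f =>
    aux_pi_marginal F p hpsum i f
  -- new competitor measure and couplings
  set Qn : Measure (Pt d) :=
    Pbar.restrict {x}ᶜ + ∑ g ∈ K, (α * W g) • Measure.dirac (m g) with hQndef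
  set π' : Fin N → Measure (Pt d × Pt d) := fun i =>
    (π i).restrict (({x} ×ˢ Set.univ)ᶜ) + ∑ g ∈ K, (α * W g) • Measure.dirac (m g, g i)
    with hπ'def
  have hαW : ∑ g ∈ K, α * W g = α := by
    rw [← Finset.mul_sum, hWsum, mul_one]
  have hQnProb : IsProbabilityMeasure Qn := by
    constructor
    rw [hQndef, Measure.add_apply, Measure.restrict_apply MeasurableSet.univ, Set.univ_inter,
      Measure.finset_sum_apply]
    have e : ∀ g ∈ K, ((α * W g) • Measure.dirac (m g)) Set.univ = α * W g := by
      intro g _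
      rw [Measure.smul_apply, measure_univ, smul_eq_mul, mul_one]
    rw [Finset.sum_congr rfl e, hαW, add_comm, hαdef,
      measure_add_measure_compl (measurableSet_singleton x), measure_univ]
  have hQnFSM : FiniteSecondMoment Qn := by
    rw [FiniteSecondMoment, hQndef, lintegral_add_measure, lintegral_finset_sum_measure]
    refine ENNReal.add_lt_top.mpr ⟨?_, ?_⟩
    · exact lt_of_le_of_lt (setLIntegral_le_lintegral _ _) hPbarFSM
    · refine ENNReal.sum_lt_top.mpr fun g _ => ?_
      rw [lintegral_smul_measure, lintegral_dirac]
      exact ENNReal.mul_lt_top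
        (ENNReal.mul_lt_top hαtop.lt_top (hWtop g).lt_top) ENNReal.ofReal_lt_top
  -- marginals of π'
  have hπ'fst : ∀ i, (π' i).map Prod.fst = Qn := by
    intro i
    ext A hA
    rw [Measure.map_apply measurable_fst hA, hπ'def]
    rw [Measure.add_apply, Measure.restrict_apply (measurable_fst hA),
      Measure.finset_sum_apply]
    have hset : Prod.fst ⁻¹' A ∩ ({x} ×ˢ (Set.univ : Set (Pt d)))ᶜ
        = (A ∩ {x}ᶜ) ×ˢ (Set.univ : Set (Pt d)) := by
      ext q
      simp only [Set.mem_inter_iff, Set.mem_preimage, Set.mem_compl_iff, Set.mem_prod,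
        Set.mem_singleton_iff, Set.mem_univ, and_true]
    rw [hset, hπfst i _ (hA.inter (measurableSet_singleton x).compl)]
    rw [hQndef, Measure.add_apply, Measure.restrict_apply hA, Measure.finset_sum_apply]
    congr 1
    refine Finset.sum_congr rfl fun g _ => ?_
    rw [Measure.smul_apply, Measure.smul_apply, Measure.dirac_apply' _ (measurable_fst hA),
      Measure.dirac_apply' _ hA]
    congr 1
  have hπ'snd : ∀ i, (π' i).map Prod.snd = Pm i := by
    intro i
    ext B hB
    rw [Measure.map_apply measurable_snd hB, hπ'def]
    rw [Measure.add_apply, Measure.restrict_apply (measurable_snd hB),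
      Measure.finset_sum_apply]
    have hset : Prod.snd ⁻¹' B ∩ ({x} ×ˢ (Set.univ : Set (Pt d)))ᶜ
        = ({x}ᶜ ×ˢ B : Set (Pt d × Pt d)) := by
      ext q
      simp only [Set.mem_inter_iff, Set.mem_preimage, Set.mem_compl_iff, Set.mem_prod,
        Set.mem_singleton_iff, Set.mem_univ, and_true]
      tauto
    rw [hset]
    -- second piece equals π i ({x} ×ˢ B)
    have hpiece : ∑ g ∈ K, ((α * W g) • Measure.dirac (m g, g i)) (Prod.snd ⁻¹' B)
        = π i ({x} ×ˢ B) := by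
      have h1 : ∀ g : Fin N → Pt d, ((α * W g) • Measure.dirac (m g, g i)) (Prod.snd ⁻¹' B)
          = α * (W g * (if g i ∈ B then 1 else 0)) := by
        intro g
        rw [Measure.smul_apply, Measure.dirac_apply' _ (measurable_snd hB), smul_eq_mul,
          mul_assoc, Set.indicator_apply]
        simp only [Set.mem_preimage, Pi.one_apply]
      simp_rw [h1]
      rw [← Finset.mul_sum, hmarg i (fun y => if y ∈ B then 1 else 0), Finset.mul_sum]
      have h2 : π i ({x} ×ˢ B) = (π i).restrict ({x} ×ˢ Set.univ) (Set.univ ×ˢ B) := by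
        rw [Measure.restrict_apply (MeasurableSet.univ.prod hB)]
        congr 1
        ext q
        simp only [Set.mem_inter_iff, Set.mem_prod, Set.mem_univ, true_and, and_true,
          Set.mem_singleton_iff]
        tauto
      rw [h2, hσ i, Measure.finset_sum_apply]
      refine Finset.sum_congr rfl fun y _ => ?_
      rw [Measure.smul_apply, Measure.dirac_apply' _ (MeasurableSet.univ.prod hB), smul_eq_mul,
        ← mul_assoc, hwp i y]
      congr 1
      by_cases h : y ∈ B
      · simp [Set.indicator_of_mem, Set.mem_prod, h]
      · have : (x, y) ∉ (Set.univ ×ˢ B : Set (Pt d × Pt d)) := by simp [h]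
        simp [Set.indicator_of_notMem this, h]
    rw [hpiece]
    have hunion : ({x}ᶜ ×ˢ B : Set (Pt d × Pt d)) ∪ ({x} ×ˢ B) = Set.univ ×ˢ B := by
      rw [← Set.union_prod, Set.compl_union_self]
    have hdisj : Disjoint ({x}ᶜ ×ˢ B : Set (Pt d × Pt d)) ({x} ×ˢ B) := by
      rw [Set.disjoint_left]
      rintro ⟨a, b⟩ ⟨ha, -⟩ ⟨ha', -⟩
      exact ha ha'
    rw [← measure_union hdisj ((measurableSet_singleton x).prod hB), hunion, hπsnd i B hB]
  -- cost of π'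
  have hC' : ∀ i, ∫⁻ q, c q.1 q.2 ∂π' i
      = (∫⁻ q in ({x} ×ˢ Set.univ)ᶜ, c q.1 q.2 ∂π i) + ∑ g ∈ K, (α * W g) * c (m g) (g i) := by
    intro i
    rw [hπ'def, lintegral_add_measure, lintegral_finset_sum_measure]
    congr 1
    refine Finset.sum_congr rfl fun g _ => ?_
    rw [lintegral_smul_measure, lintegral_dirac, smul_eq_mul]
  -- W2sq bounds
  have hW2le : ∀ i, W2sq Qn (Pm i) ≤ ∫⁻ q, c q.1 q.2 ∂π' i := by
    intro i
    exact iInf₂_le (π' i) ⟨hπ'fst i, hπ'snd i⟩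
  -- finiteness of the optimal cost
  have hPmFSM : ∀ i, FiniteSecondMoment (Pm i) := by
    intro i
    rw [FiniteSecondMoment, aux_lintegral_conc (Pm i) (F i) (hFconc i)]
    exact ENNReal.sum_lt_top.mpr fun y _ =>
      ENNReal.mul_lt_top (measure_ne_top _ _).lt_top ENNReal.ofReal_lt_top
  have hCfin : ∀ i, ∫⁻ q, c q.1 q.2 ∂π i < ⊤ := by
    intro i
    have hb : ∫⁻ q, c q.1 q.2 ∂π i
        ≤ ∫⁻ q : Pt d × Pt d,
            (2 * ENNReal.ofReal (‖q.1‖^2) + 2 * ENNReal.ofReal (‖q.2‖^2)) ∂π i :=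
      lintegral_mono fun q => aux_cost_bound q.1 q.2
    refine lt_of_le_of_lt hb ?_
    rw [lintegral_add_left (by
      exact (measurable_fst.norm.pow_const 2).ennreal_ofReal.const_mul 2)]
    rw [lintegral_const_mul 2 (measurable_fst.norm.pow_const 2).ennreal_ofReal,
      lintegral_const_mul 2 (measurable_snd.norm.pow_const 2).ennreal_ofReal]
    have h1 : ∫⁻ q : Pt d × Pt d, ENNReal.ofReal (‖q.1‖^2) ∂π i
        = ∫⁻ z, ENNReal.ofReal (‖z‖^2) ∂Pbar := by
      rw [← (hcoupl i).1, lintegral_map (measurable_norm.pow_const 2).ennreal_ofReal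
        measurable_fst]
    have h2 : ∫⁻ q : Pt d × Pt d, ENNReal.ofReal (‖q.2‖^2) ∂π i
        = ∫⁻ z, ENNReal.ofReal (‖z‖^2) ∂Pm i := by
      rw [← (hcoupl i).2, lintegral_map (measurable_norm.pow_const 2).ennreal_ofReal
        measurable_snd]
    rw [h1, h2]
    exact ENNReal.add_lt_top.mpr
      ⟨ENNReal.mul_lt_top ENNReal.ofNat_lt_top hPbarFSM,
       ENNReal.mul_lt_top ENNReal.ofNat_lt_top (hPmFSM i)⟩
  -- the key pointwise split identity in ℝ≥0∞
  have hsplit : ∀ g : Fin N → Pt d,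
      (∑ i, L i * c x (g i)) = c x (m g) + ∑ i, L i * c (m g) (g i) := by
    intro g
    have hr := aux_centroid l hsum g x
    have e1 : ∀ (z : Pt d), ∑ i, L i * c z (g i) = ENNReal.ofReal (∑ i, l i * ‖z - g i‖^2) := by
      intro z
      rw [ENNReal.ofReal_sum_of_nonneg (fun i _ => mul_nonneg (hl i).le (by positivity))]
      refine Finset.sum_congr rfl fun i _ => ?_
      rw [hLdef, hcdef, ← ENNReal.ofReal_mul (hl i).le]
    rw [e1 x, hr, ENNReal.ofReal_add (by positivity)
      (Finset.sum_nonneg fun i _ => mul_nonneg (hl i).le (by positivity)), ← e1 (m g)]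
  -- bookkeeping: old cost = new cost + deficit
  set R : Fin N → ℝ≥0∞ := fun i => ∫⁻ q in ({x} ×ˢ Set.univ)ᶜ, c q.1 q.2 ∂π i with hRdef
  set Δ : ℝ≥0∞ := α * ∑ g ∈ K, W g * c x (m g) with hΔdef
  set T : ℝ≥0∞ := ∑ i, L i * ∫⁻ q, c q.1 q.2 ∂π i with hTdef
  set T' : ℝ≥0∞ := ∑ i, L i * ∫⁻ q, c q.1 q.2 ∂π' i with hT'def
  have hT : T = (∑ i, L i * R i) + Δ + α * ∑ g ∈ K, W g * ∑ i, L i * c (m g) (g i) := by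
    rw [hTdef]
    have e : ∀ i, L i * ∫⁻ q, c q.1 q.2 ∂π i
        = L i * R i + L i * ∑ g ∈ K, W g * c x (g i) * α := by
      intro i
      rw [hCsplit i, mul_add]
      congr 2
      have : ∀ y, w i y * c x y = α * (p i y * c x y) := by
        intro y; rw [← mul_assoc, hwp i y]
      simp_rw [this]
      rw [← Finset.mul_sum, ← hmarg i (fun y => c x y), Finset.mul_sum]
      exact Finset.sum_congr rfl fun g _ => by ring
    simp_rw [e]
    rw [Finset.sum_add_distrib, add_assoc]
    congr 1
    have : ∀ i, L i * ∑ g ∈ K, W g * c x (g i) * α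
        = α * (L i * ∑ g ∈ K, W g * c x (g i)) := by
      intro i
      rw [Finset.mul_sum, Finset.mul_sum, Finset.mul_sum]
      exact Finset.sum_congr rfl fun g _ => by ring
    simp_rw [this]
    rw [← Finset.mul_sum, aux_swap Finset.univ K L W (fun i g => c x (g i))]
    have : ∀ g ∈ K, W g * ∑ i, L i * c x (g i)
        = W g * c x (m g) + W g * ∑ i, L i * c (m g) (g i) := by
      intro g _
      rw [hsplit g, mul_add]
    rw [Finset.sum_congr rfl this, Finset.sum_add_distrib, mul_add, hΔdef]
  have hT' : T' = (∑ i, L i * R i) + α * ∑ g ∈ K, W g * ∑ i, L i * c (m g) (g i) := by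
    rw [hT'def]
    have e : ∀ i, L i * ∫⁻ q, c q.1 q.2 ∂π' i
        = L i * R i + L i * ∑ g ∈ K, W g * c (m g) (g i) * α := by
      intro i
      rw [hC' i, mul_add]
      congr 2
      exact Finset.sum_congr rfl fun g _ => by ring
    simp_rw [e]
    rw [Finset.sum_add_distrib]
    congr 1
    have : ∀ i, L i * ∑ g ∈ K, W g * c (m g) (g i) * α
        = α * (L i * ∑ g ∈ K, W g * c (m g) (g i)) := by
      intro i
      rw [Finset.mul_sum, Finset.mul_sum, Finset.mul_sum]
      exact Finset.sum_congr rfl fun g _ => by ring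
    simp_rw [this]
    rw [← Finset.mul_sum, aux_swap Finset.univ K L W (fun i g => c (m g) (g i))]
  have hTfin : T ≠ ⊤ := by
    rw [hTdef]
    refine (ENNReal.sum_lt_top.mpr fun i _ => ?_).ne
    exact ENNReal.mul_lt_top ENNReal.ofReal_lt_top (hCfin i)
  -- optimality chain
  have hchain : T ≤ T' := by
    calc T = phi l Pm Pbar := hopt
      _ ≤ phi l Pm Qn := hmin Qn hQnProb hQnFSM
      _ ≤ T' := by
          rw [phi, hT'def]
          exact Finset.sum_le_sum fun i _ => mul_le_mul_right (hW2le i) _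
  have h1 : T = T' + Δ := by
    rw [hT, hT']
    ring
  have hT'fin : T' ≠ ⊤ := by
    intro h
    apply hTfin
    rw [h1, h, top_add]
  have hΔ0 : Δ = 0 := by
    have h2 : T' + Δ ≤ T' + 0 := by
      rw [add_zero, ← h1]
      exact hchain
    have h3 := (ENNReal.add_le_add_iff_left hT'fin).mp h2
    exact le_antisymm h3 zero_le
  have hzero : ∀ g ∈ K, W g * c x (m g) = 0 := by
    have hs : ∑ g ∈ K, W g * c x (m g) = 0 := by
      rcases mul_eq_zero.mp hΔ0 with h | h
      · exact absurd h hα0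
      · exact h
    exact fun g hg => (Finset.sum_eq_zero_iff.mp hs) g hg
  have hcent : ∀ g ∈ K, W g ≠ 0 → x = m g := by
    intro g hg hW
    have hc0 : c x (m g) = 0 := by
      rcases mul_eq_zero.mp (hzero g hg) with h | h
      · exact absurd h hW
      · exact h
    rw [hcdef] at hc0
    simp only [ENNReal.ofReal_eq_zero] at hc0
    have : ‖x - m g‖^2 = 0 := le_antisymm hc0 (by positivity)
    have : x - m g = 0 := by
      rwa [pow_eq_zero_iff (by norm_num), norm_eq_zero] at this
    exact sub_eq_zero.mp this
  -- choose the target points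
  have hex : ∀ i, ∃ y, y ∈ F i ∧ p i y ≠ 0 := by
    intro i
    by_contra h
    push_neg at h
    have : ∑ y ∈ F i, p i y = 0 := Finset.sum_eq_zero fun y hy => by
      by_contra h'
      exact h' (h y hy)
    rw [hpsum i] at this
    exact one_ne_zero this
  choose y hyF hyp using hex
  have hp_iff : ∀ i y', p i y' ≠ 0 ↔ w i y' ≠ 0 := by
    intro i y'
    rw [hpdef]
    simp only [ne_eq, ENNReal.div_eq_zero_iff, not_or]
    constructor
    · intro h; exact h.1
    · intro h; exact ⟨h, hαtop⟩
  have hmemK : ∀ g : Fin N → Pt d, (∀ i, g i ∈ F i) → g ∈ K := fun g hg =>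
    Fintype.mem_piFinset.mpr hg
  have hWne : ∀ g : Fin N → Pt d, (∀ i, p i (g i) ≠ 0) → W g ≠ 0 := by
    intro g hg
    rw [hWdef]
    exact Finset.prod_ne_zero_iff.mpr fun i _ => hg i
  have hxy : x = ∑ i, l i • y i := hcent y (hmemK y hyF) (hWne y hyp)
  -- uniqueness
  have huniq : ∀ i, ∀ y' : Pt d, w i y' ≠ 0 → y' = y i := by
    intro i y' hy'
    have hy'F : y' ∈ F i := by
      by_contra h
      exact hy' (hw0 i y' h)
    have hp' : p i y' ≠ 0 := (hp_iff i y').mpr hy'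
    set g' : Fin N → Pt d := Function.update y i y' with hg'def
    have hg'F : ∀ j, g' j ∈ F j := by
      intro j
      by_cases h : j = i
      · subst h; rw [hg'def, Function.update_self]; exact hy'F
      · rw [hg'def, Function.update_of_ne h]; exact hyF j
    have hg'p : ∀ j, p j (g' j) ≠ 0 := by
      intro j
      by_cases h : j = i
      · subst h; rw [hg'def, Function.update_self]; exact hp'
      · rw [hg'def, Function.update_of_ne h]; exact hyp j
    have hxy' : x = ∑ j, l j • g' j := hcent g' (hmemK g' hg'F) (hWne g' hg'p)
    have hEq : ∑ j, l j • y j = ∑ j, l j • g' j := hxy ▸ hxy'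
    rw [← Finset.add_sum_erase _ (fun j => l j • y j) (Finset.mem_univ i),
      ← Finset.add_sum_erase _ (fun j => l j • g' j) (Finset.mem_univ i)] at hEq
    have hrest : ∑ j ∈ Finset.univ.erase i, l j • g' j
        = ∑ j ∈ Finset.univ.erase i, l j • y j :=
      Finset.sum_congr rfl fun j hj => by
        rw [hg'def, Function.update_of_ne (Finset.ne_of_mem_erase hj)]
    rw [hrest] at hEq
    have : l i • y i = l i • g' i := add_right_cancel hEq
    rw [hg'def, Function.update_self] at this
    exact (smul_right_injective (Pt d) (hl i).ne' this.symm)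
  -- mass
  have hmass : ∀ i, π i {(x, y i)} = Pbar {x} := by
    intro i
    have h : ∑ z ∈ F i, w i z = w i (y i) :=
      Finset.sum_eq_single_of_mem (y i) (hyF i) fun b _ hb => by
        by_contra hcon
        exact hb (huniq i b hcon)
    exact h.symm.trans (hwsum i)
  -- support membership
  have hmsupp : ∀ i, y i ∈ msupp (Pm i) := by
    intro i
    have h1 : α ≤ Pm i {y i} := by
      rw [← hπsnd i {y i} (measurableSet_singleton _), hαdef, ← hmass i]
      exact measure_mono (by rintro q rfl; exact ⟨Set.mem_univ _, rfl⟩)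
    intro h0
    rw [h0] at h1
    exact hα0 (le_antisymm h1 zero_le)
  exact ⟨y, fun i => ⟨hmsupp i, hmass i, huniq i⟩, hxy⟩
end

section
/- The approximation factor 2 for restricting the support to S_org is tight: there exist discrete probability measures P_1, …, P_N on ℝ^d and weights λ_1, …, λ_N > 0 with ∑_{i=1}^N λ_i = 1 such that, with P̄ a barycenter and P̄_org a minimizer of φ among probability measures supported in S_org = ∪_{i=1}^N supp(P_i), one has φ(P̄_org) = 2 · φ(P̄) > 0. Concretely, this holds for N = 2, P_1 = δ_{x_1}, P_2 = δ_{x_2} with x_1 ≠ x_2, and λ_1 = λ_2 = 1/2. -/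
open MeasureTheory ENNReal

lemma msupp_dirac {d : ℕ} (x : Pt d) : msupp (Measure.dirac x) = {x} := by
  ext y
  simp only [msupp, Measure.dirac_apply, Set.mem_setOf_eq, Set.mem_singleton_iff,
    Set.indicator_apply, Set.mem_singleton_iff]
  by_cases h : x = y <;> simp [h, eq_comm]

lemma W2sq_dirac_right {d : ℕ} (P : Measure (Pt d)) [IsProbabilityMeasure P] (x : Pt d) :
    W2sq P (Measure.dirac x) = ∫⁻ y, ENNReal.ofReal (‖y - x‖ ^ 2) ∂P := by
  have hker : Measurable fun p : Pt d × Pt d => ENNReal.ofReal (‖p.1 - p.2‖ ^ 2) :=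
    (((continuous_fst.sub continuous_snd).norm.pow 2).measurable).ennreal_ofReal
  have hf : Measurable fun y : Pt d => ENNReal.ofReal (‖y - x‖ ^ 2) :=
    (((continuous_id.sub continuous_const).norm.pow 2).measurable).ennreal_ofReal
  apply le_antisymm
  · have hm : Measurable fun y : Pt d => (y, x) := measurable_id.prodMk measurable_const
    have h1 : (P.map fun y => (y, x)).map Prod.fst = P := by
      rw [Measure.map_map measurable_fst hm]
      rw [show (Prod.fst ∘ fun y : Pt d => (y, x)) = id from rfl, Measure.map_id]
    have h2 : (P.map fun y => (y, x)).map Prod.snd = Measure.dirac x := by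
      rw [Measure.map_map measurable_snd hm]
      rw [show (Prod.snd ∘ fun y : Pt d => (y, x)) = fun _ => x from rfl, Measure.map_const]
      simp
    refine iInf₂_le_of_le (P.map fun y => (y, x)) ⟨h1, h2⟩ ?_
    rw [lintegral_map hker hm]
  · refine le_iInf₂ fun π hπ => le_of_eq ?_
    obtain ⟨h1, h2⟩ := hπ
    have hzero : π (Prod.snd ⁻¹' {x}ᶜ) = 0 := by
      rw [← Measure.map_apply measurable_snd (measurableSet_singleton x).compl, h2]
      simp
    have hae : ∀ᵐ p ∂π, p.2 = x := by
      rw [ae_iff]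
      exact hzero
    calc ∫⁻ y, ENNReal.ofReal (‖y - x‖ ^ 2) ∂P
        = ∫⁻ p, ENNReal.ofReal (‖p.1 - x‖ ^ 2) ∂π := by
          rw [← h1, lintegral_map hf measurable_fst]
      _ = ∫⁻ p, ENNReal.ofReal (‖p.1 - p.2‖ ^ 2) ∂π := by
          refine lintegral_congr_ae ?_
          filter_upwards [hae] with p hp
          rw [hp]

lemma phi_eq_half_lintegral {d : ℕ} (x₁ x₂ : Pt d) (P : Measure (Pt d))
    [IsProbabilityMeasure P] :
    phi ![1 / 2, 1 / 2] ![Measure.dirac x₁, Measure.dirac x₂] P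
      = ENNReal.ofReal (1 / 2) *
        ∫⁻ y, (ENNReal.ofReal (‖y - x₁‖ ^ 2) + ENNReal.ofReal (‖y - x₂‖ ^ 2)) ∂P := by
  have hf1 : Measurable fun y : Pt d => ENNReal.ofReal (‖y - x₁‖ ^ 2) :=
    (((continuous_id.sub continuous_const).norm.pow 2).measurable).ennreal_ofReal
  rw [phi, Fin.sum_univ_two]
  simp only [Matrix.cons_val_zero, Matrix.cons_val_one, Matrix.head_cons]
  rw [W2sq_dirac_right, W2sq_dirac_right, lintegral_add_left hf1, mul_add]

/-- the 2-approximation factor is tight, realized by two Dirac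
measures at distinct points with weights 1/2, 1/2: there, every minimizer of φ
over measures supported in S_org satisfies φ(P̄_org) = 2 φ(P̄) > 0. -/
theorem orig_support_two_approx_tight {d : ℕ} (x₁ x₂ : Pt d) (hx : x₁ ≠ x₂)
    (l : Fin 2 → ℝ) (hl : l = ![1 / 2, 1 / 2])
    (Pm : Fin 2 → Measure (Pt d))
    (hPm : Pm = ![Measure.dirac x₁, Measure.dirac x₂])
    (Pbar : Measure (Pt d)) (hbar : IsBarycenter l Pm Pbar)
    (Porg : Measure (Pt d)) (hPorgProb : IsProbabilityMeasure Porg)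
    (hPorgSupp : Porg (origSupport Pm)ᶜ = 0)
    (hPorgOpt : ∀ Q : Measure (Pt d), IsProbabilityMeasure Q →
      Q (origSupport Pm)ᶜ = 0 → phi l Pm Porg ≤ phi l Pm Q) :
    phi l Pm Porg = 2 * phi l Pm Pbar ∧ 0 < phi l Pm Pbar := by
  subst hl hPm
  obtain ⟨hPbarProb, hPbarMom, hPbarOpt⟩ := hbar
  haveI := hPbarProb
  haveI := hPorgProb
  have hxne : x₁ - x₂ ≠ 0 := sub_ne_zero.mpr hx
  have hc : 0 < ‖x₁ - x₂‖ ^ 2 := pow_pos (norm_pos_iff.mpr hxne) 2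
  -- pointwise bound
  have hpt : ∀ y : Pt d, ‖x₁ - x₂‖ ^ 2 / 2 ≤ ‖y - x₁‖ ^ 2 + ‖y - x₂‖ ^ 2 := by
    intro y
    have h1 : ‖x₁ - x₂‖ = ‖(y - x₂) - (y - x₁)‖ := by
      congr 1
      abel
    have h2 : ‖x₁ - x₂‖ ≤ ‖y - x₂‖ + ‖y - x₁‖ := h1 ▸ norm_sub_le _ _
    nlinarith [norm_nonneg (y - x₁), norm_nonneg (y - x₂), norm_nonneg (x₁ - x₂),
      sq_nonneg (‖y - x₁‖ - ‖y - x₂‖)]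
  -- φ(Porg)
  have hOrg : origSupport ![Measure.dirac x₁, Measure.dirac x₂] = {x₁, x₂} := by
    ext y
    simp [origSupport, Fin.exists_fin_two, msupp_dirac]
  have haeOrg : ∀ᵐ y ∂Porg, y ∈ ({x₁, x₂} : Set (Pt d)) := by
    rw [ae_iff]
    rw [hOrg] at hPorgSupp
    exact hPorgSupp
  have hPorg : phi ![1 / 2, 1 / 2] ![Measure.dirac x₁, Measure.dirac x₂] Porg
      = ENNReal.ofReal (1 / 2) * ENNReal.ofReal (‖x₁ - x₂‖ ^ 2) := by
    rw [phi_eq_half_lintegral]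
    congr 1
    have h : ∫⁻ y, (ENNReal.ofReal (‖y - x₁‖ ^ 2) + ENNReal.ofReal (‖y - x₂‖ ^ 2)) ∂Porg
        = ∫⁻ _, ENNReal.ofReal (‖x₁ - x₂‖ ^ 2) ∂Porg := by
      refine lintegral_congr_ae ?_
      filter_upwards [haeOrg] with y hy
      rcases hy with hy | hy
      · rw [hy]
        simp
      · simp only [Set.mem_singleton_iff] at hy
        rw [hy, norm_sub_rev x₂ x₁]
        simp
    rw [h, lintegral_const, measure_univ, mul_one]
  -- lower bound for φ(Pbar)
  have hlow : ENNReal.ofReal (1 / 2) * ENNReal.ofReal (‖x₁ - x₂‖ ^ 2 / 2)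
      ≤ phi ![1 / 2, 1 / 2] ![Measure.dirac x₁, Measure.dirac x₂] Pbar := by
    rw [phi_eq_half_lintegral]
    refine mul_le_mul_right ?_ _
    calc ENNReal.ofReal (‖x₁ - x₂‖ ^ 2 / 2)
        = ∫⁻ _, ENNReal.ofReal (‖x₁ - x₂‖ ^ 2 / 2) ∂Pbar := by
          rw [lintegral_const, measure_univ, mul_one]
      _ ≤ _ := by
          refine lintegral_mono fun y => ?_
          rw [← ENNReal.ofReal_add (by positivity) (by positivity)]
          exact ENNReal.ofReal_le_ofReal (hpt y)
  -- the midpoint Dirac measure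
  have hm1 : (2⁻¹ : ℝ) • (x₁ + x₂) - x₁ = (2⁻¹ : ℝ) • (x₂ - x₁) := by module
  have hm2 : (2⁻¹ : ℝ) • (x₁ + x₂) - x₂ = (2⁻¹ : ℝ) • (x₁ - x₂) := by module
  have hmn1 : ‖(2⁻¹ : ℝ) • (x₁ + x₂) - x₁‖ ^ 2 = ‖x₁ - x₂‖ ^ 2 / 4 := by
    rw [hm1, norm_smul, norm_sub_rev x₂ x₁]
    simp only [norm_inv, Real.norm_ofNat]
    ring
  have hmn2 : ‖(2⁻¹ : ℝ) • (x₁ + x₂) - x₂‖ ^ 2 = ‖x₁ - x₂‖ ^ 2 / 4 := by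
    rw [hm2, norm_smul]
    simp only [norm_inv, Real.norm_ofNat]
    ring
  have hdiracMom : FiniteSecondMoment (Measure.dirac ((2⁻¹ : ℝ) • (x₁ + x₂))) := by
    rw [FiniteSecondMoment, lintegral_dirac]
    exact ENNReal.ofReal_lt_top
  have hphidirac : phi ![1 / 2, 1 / 2] ![Measure.dirac x₁, Measure.dirac x₂]
        (Measure.dirac ((2⁻¹ : ℝ) • (x₁ + x₂)))
      = ENNReal.ofReal (1 / 2) * ENNReal.ofReal (‖x₁ - x₂‖ ^ 2 / 2) := by
    rw [phi_eq_half_lintegral, lintegral_dirac, hmn1, hmn2,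
      ← ENNReal.ofReal_add (by positivity) (by positivity)]
    congr 2
    ring
  have hPbar : phi ![1 / 2, 1 / 2] ![Measure.dirac x₁, Measure.dirac x₂] Pbar
      = ENNReal.ofReal (1 / 2) * ENNReal.ofReal (‖x₁ - x₂‖ ^ 2 / 2) := by
    refine le_antisymm ?_ hlow
    rw [← hphidirac]
    exact hPbarOpt _ (by infer_instance) hdiracMom
  refine ⟨?_, ?_⟩
  · rw [hPorg, hPbar,
      ← ENNReal.ofReal_mul (by norm_num : (0:ℝ) ≤ 1 / 2),
      ← ENNReal.ofReal_mul (by norm_num : (0:ℝ) ≤ 1 / 2),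
      two_mul, ← ENNReal.ofReal_add (by positivity) (by positivity)]
    congr 1
    ring
  · rw [hPbar]
    refine ENNReal.mul_pos ?_ ?_
    · simp only [ne_eq, ENNReal.ofReal_eq_zero, not_le]
      norm_num
    · simp only [ne_eq, ENNReal.ofReal_eq_zero, not_le]
      positivity
end
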